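/- Let k, t, n be integers with 2 ≤ k < n < 2^k and k ≤ t. Then there exists a (2^k, 2^t; n, 2^t − 1)-de Bruijn array code of size 2^{n(2^t − 1) − k − t}. -/

import Mathlib

open Finset

/-! ### Binomial coefficients mod 2 -/

def bin2 (n k : ℕ) : ZMod 2 := (n.choose k : ZMod 2)

lemma bin2_self (n : ℕ) : bin2 n n = 1 := by simp [bin2]

lemma bin2_zero (n : ℕ) : bin2 n 0 = 1 := by simp [bin2]

lemma bin2_of_lt {n k : ℕ} (h : n < k) : bin2 n k = 0 := by
  simp [bin2, Nat.choose_eq_zero_of_lt h]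

lemma bin2_succ_succ (n k : ℕ) : bin2 (n+1) (k+1) = bin2 n k + bin2 n (k+1) := by
  simp [bin2, Nat.choose_succ_succ, Nat.cast_add]

lemma bin2_one (n : ℕ) : bin2 n 1 = (n : ZMod 2) := by simp [bin2]

/-- key fact via `(X+1)^(2^j) = X^(2^j)+1` in char 2. -/
lemma bin2_add_pow (u j v : ℕ) :
    bin2 (u + 2^j) v = bin2 u v + (if 2^j ≤ v then bin2 u (v - 2^j) else 0) := by
  classical
  have hchar : ∀ (n k : ℕ), ((Polynomial.X + Polynomial.C (1 : ZMod 2)) ^ n).coeff k = bin2 n k := by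
    intro n k
    rw [Polynomial.coeff_X_add_C_pow]
    simp [bin2]
  have hsplit : (Polynomial.X + Polynomial.C (1 : ZMod 2)) ^ (u + 2^j)
      = (Polynomial.X + Polynomial.C (1 : ZMod 2)) ^ u * Polynomial.X ^ (2^j)
        + (Polynomial.X + Polynomial.C (1 : ZMod 2)) ^ u := by
    have h2 : (Polynomial.X + Polynomial.C (1 : ZMod 2)) ^ (2^j)
        = Polynomial.X ^ (2^j) + Polynomial.C (1:ZMod 2) ^ (2^j) := by
      exact add_pow_char_pow _ _ 2 j
    rw [pow_add, h2, Polynomial.C_1, one_pow, mul_add, mul_one]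
  have := congrArg (fun p => Polynomial.coeff p v) hsplit
  simp only [Polynomial.coeff_add] at this
  rw [hchar, hchar, Polynomial.coeff_mul_X_pow'] at this
  rw [this]
  by_cases h : 2^j ≤ v
  · simp only [h, if_true] at this ⊢
    rw [hchar]
    ring
  · simp only [h, if_false] at this ⊢
    ring

lemma bin2_add_pow_lt {v : ℕ} (u j : ℕ) (hv : v < 2^j) : bin2 (u + 2^j) v = bin2 u v := by
  rw [bin2_add_pow]; simp [Nat.not_le.2 hv]

lemma bin2_add_pow_ge {v : ℕ} (u j : ℕ) (hv : 2^j ≤ v) :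
    bin2 (u + 2^j) v = bin2 u v + bin2 u (v - 2^j) := by
  rw [bin2_add_pow]; simp [hv]

/-- middle binomials of `2^j` vanish mod 2 -/
lemma bin2_two_pow {v : ℕ} (j : ℕ) (h0 : 0 < v) (hv : v < 2^j) : bin2 (2^j) v = 0 := by
  have := bin2_add_pow_lt (v := v) 0 j hv
  rw [zero_add] at this
  rw [this, bin2_of_lt h0]

/-- all binomials of `2^j - 1` are odd -/
lemma bin2_pred_pow {v : ℕ} (j : ℕ) (hv : v ≤ 2^j - 1) : bin2 (2^j - 1) v = 1 := by
  induction j generalizing v with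
  | zero => interval_cases v; simp [bin2]
  | succ j ih =>
    have h2 : (1:ℕ) ≤ 2^j := Nat.one_le_two_pow
    have hdecomp : 2^(j+1) - 1 = (2^j - 1) + 2^j := by
      have : 2^(j+1) = 2^j + 2^j := by ring
      omega
    rw [hdecomp]
    by_cases h : v < 2^j
    · rw [bin2_add_pow_lt _ _ h]
      by_cases h' : v ≤ 2^j - 1
      · exact ih h'
      · omega
    · rw [bin2_add_pow_ge _ _ (Nat.not_lt.1 h)]
      have h1 : bin2 (2^j - 1) v = 0 := bin2_of_lt (by omega)
      have h2' : v - 2^j ≤ 2^j - 1 := by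
        have : v ≤ 2^(j+1) - 1 := hv
        have : 2^(j+1) = 2^j + 2^j := by ring
        omega
      rw [h1, ih h2', zero_add]

/-- hockey stick mod 2 -/
lemma sum_range_bin2 (M l : ℕ) : ∑ z ∈ range M, bin2 z l = bin2 M (l+1) := by
  induction M with
  | zero => simp [bin2_of_lt (Nat.succ_pos l)]
  | succ M ih => rw [Finset.sum_range_succ, ih, bin2_succ_succ, add_comm]

lemma sum_bin2_two_pow (j l : ℕ) (h0 : 0 < l + 1) (hl : l + 1 < 2^j) :
    ∑ z ∈ range (2^j), bin2 z l = 0 := by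
  rw [sum_range_bin2]; exact bin2_two_pow j h0 hl

/-! ### char-2 helper -/

lemma two_eq_zero : (2 : ZMod 2) = 0 := rfl

/-! ### difference powers -/

def dpow (L : ℕ) (g : ℕ → ZMod 2) (z : ℕ) : ZMod 2 :=
  ∑ l ∈ range (L+1), bin2 L l * g (z + l)

lemma dpow_zero (g : ℕ → ZMod 2) (z : ℕ) : dpow 0 g z = g z := by
  simp [dpow, bin2]

lemma dpow_congr {f g : ℕ → ZMod 2} (h : ∀ z, f z = g z) (L z : ℕ) :
    dpow L f z = dpow L g z := by
  unfold dpow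
  exact Finset.sum_congr rfl fun l _ => by rw [h]

lemma dpow_succ (L : ℕ) (g : ℕ → ZMod 2) (z : ℕ) :
    dpow (L+1) g z = dpow L g (z+1) + dpow L g z := by
  have e1 : dpow (L+1) g z = ∑ l ∈ range (L+1), bin2 (L+1) (l+1) * g (z+1+l) + g z := by
    rw [dpow, Finset.sum_range_succ']
    congr 1
    · apply Finset.sum_congr rfl
      intro l _
      have h : z + (l+1) = z+1+l := by omega
      rw [h]
    · simp [bin2_zero]
  have e2 : dpow L g z = ∑ l ∈ range (L+1), bin2 L (l+1) * g (z+1+l) + g z := by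
    rw [dpow, Finset.sum_range_succ',
      Finset.sum_range_succ (fun l => bin2 L (l+1) * g (z+1+l)) L,
      bin2_of_lt (Nat.lt_succ_self L), bin2_zero]
    simp only [zero_mul, add_zero, one_mul, Nat.add_zero]
    congr 1
    apply Finset.sum_congr rfl
    intro l _
    have h : z + (l+1) = z+1+l := by omega
    rw [h]
  have e3 : dpow L g (z+1) = ∑ l ∈ range (L+1), bin2 L l * g (z+1+l) := by
    rw [dpow]
  rw [e1, e2, e3]
  have e4 : ∑ l ∈ range (L+1), bin2 (L+1) (l+1) * g (z+1+l)
      = ∑ l ∈ range (L+1), bin2 L l * g (z+1+l)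
        + ∑ l ∈ range (L+1), bin2 L (l+1) * g (z+1+l) := by
    rw [← Finset.sum_add_distrib]
    apply Finset.sum_congr rfl
    intro l _
    rw [bin2_succ_succ]
    ring
  rw [e4]
  ring

lemma dpow_comp (a b : ℕ) (g : ℕ → ZMod 2) (z : ℕ) :
    dpow a (fun w => dpow b g w) z = dpow (a+b) g z := by
  induction a generalizing z with
  | zero => rw [dpow_zero]; simp
  | succ a ih =>
    rw [dpow_succ, ih, ih, ← dpow_succ]
    congr 1
    omega

lemma dpow_const (L : ℕ) (hL : 1 ≤ L) (c : ZMod 2) (z : ℕ) :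
    dpow L (fun _ => c) z = 0 := by
  rw [dpow, ← Finset.sum_mul]
  have h1 : ∑ l ∈ range (L+1), bin2 L l = ((2^L : ℕ) : ZMod 2) := by
    rw [← Nat.sum_range_choose L, Nat.cast_sum]
    rfl
  rw [h1]
  have h2 : ((2^L : ℕ) : ZMod 2) = 0 := by
    have : (2:ℕ) ∣ 2^L := dvd_pow_self 2 (by omega)
    exact (ZMod.natCast_eq_zero_iff _ 2).2 this
  rw [h2, zero_mul]

lemma dpow_two_pow (j : ℕ) (g : ℕ → ZMod 2) (z : ℕ) :
    dpow (2^j) g z = g z + g (z + 2^j) := by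
  rw [dpow]
  rw [Finset.sum_range_succ, bin2_self, one_mul]
  rw [show range (2^j) = insert 0 (Ioo 0 (2^j)) by
    ext x; simp only [Finset.mem_range, Finset.mem_Ioo, Finset.mem_insert]
    have : (1:ℕ) ≤ 2^j := Nat.one_le_two_pow
    omega]
  rw [Finset.sum_insert (by simp)]
  rw [bin2_zero, one_mul]
  have h0 : ∑ l ∈ Ioo 0 (2^j), bin2 (2^j) l * g (z + l) = 0 := by
    apply Finset.sum_eq_zero
    intro l hl
    simp only [Finset.mem_Ioo] at hl
    rw [bin2_two_pow j hl.1 hl.2, zero_mul]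
  rw [h0]
  simp

lemma periodic_of_dpow_one {n k : ℕ} (hn : n < 2^k) (g : ℕ → ZMod 2)
    (hg : ∀ z, dpow n g z = 1) : ∀ z, g (z + 2^k) = g z := by
  intro z
  have h0 : dpow (2^k) g z = 0 := by
    have hcomp := dpow_comp (2^k - n) n g z
    rw [dpow_congr hg] at hcomp
    rw [dpow_const _ (by omega) 1 z] at hcomp
    rw [show 2^k - n + n = 2^k by omega] at hcomp
    exact hcomp.symm
  rw [dpow_two_pow] at h0
  linear_combination h0 - g z * two_eq_zero

lemma not_periodic_of_dpow_one {n j : ℕ} (hn : 2^j ≤ n) (g : ℕ → ZMod 2)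
    (hg : ∀ z, dpow n g z = 1) (hper : ∀ z, g (z + 2^j) = g z) : False := by
  have h0 : ∀ z, dpow (2^j) g z = 0 := by
    intro z
    rw [dpow_two_pow, hper]
    linear_combination g z * two_eq_zero
  have hz : dpow (n - 2^j) (fun w => dpow (2^j) g w) 0 = 0 := by
    rw [dpow_congr h0]
    unfold dpow
    apply Finset.sum_eq_zero
    intro l _
    rw [mul_zero]
  have := dpow_comp (n - 2^j) (2^j) g 0
  rw [show n - 2^j + 2^j = n by omega, hg, hz] at this
  exact zero_ne_one this

/-! ### prefix sums and windows -/

def plift (ε : ZMod 2) (u : ℕ → ZMod 2) : ℕ → ZMod 2 := fun z => ε + ∑ y ∈ range z, u y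

lemma plift_succ (ε : ZMod 2) (u : ℕ → ZMod 2) (z : ℕ) :
    plift ε u (z+1) = plift ε u z + u z := by
  simp [plift, Finset.sum_range_succ]
  ring

lemma plift_add (ε : ZMod 2) (u : ℕ → ZMod 2) (z w : ℕ) :
    plift ε u (z + w) = plift ε u z + ∑ y ∈ range w, u (z + y) := by
  induction w with
  | zero => simp
  | succ w ih =>
    rw [show z + (w+1) = (z+w)+1 by ring, plift_succ, ih, Finset.sum_range_succ]
    ring

def win (n : ℕ) (g : ℕ → ZMod 2) (i : ℕ) : Fin n → ZMod 2 := fun x => g (i + x.val)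

lemma periodic_sum_shift {u : ℕ → ZMod 2} {c : ℕ} (hu : ∀ z, u (z + c) = u z) (z : ℕ) :
    ∑ y ∈ range c, u (z + y) = ∑ y ∈ range c, u y := by
  induction z with
  | zero => simp
  | succ z ih =>
    rw [← ih]
    have key : ∀ v : ℕ → ZMod 2, ∑ y ∈ range c, v (y+1) = ∑ y ∈ range c, v y + v c + v 0 := by
      intro v
      have h1 : ∑ y ∈ range (c+1), v y = ∑ y ∈ range c, v (y+1) + v 0 :=
        Finset.sum_range_succ' v c
      have h2 : ∑ y ∈ range (c+1), v y = ∑ y ∈ range c, v y + v c :=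
        Finset.sum_range_succ v c
      have h12 := h1.symm.trans h2
      linear_combination h12 - v 0 * two_eq_zero
    have hk := key (fun y => u (z + y))
    have heq : ∑ y ∈ range c, u (z + 1 + y) = ∑ y ∈ range c, u (z + (y+1)) := by
      apply Finset.sum_congr rfl
      intro y _
      congr 1
      omega
    rw [heq, hk, hu z]
    have hz0 : u (z + 0) = u z := by rw [Nat.add_zero]
    rw [hz0]
    linear_combination u z * two_eq_zero

lemma periodic_mul {u : ℕ → ZMod 2} {c : ℕ} (hu : ∀ z, u (z + c) = u z) (m z : ℕ) :
    u (z + c * m) = u z := by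
  induction m with
  | zero => simp
  | succ m ih => rw [show z + c*(m+1) = (z + c*m) + c by ring, hu, ih]

lemma periodic_mod {u : ℕ → ZMod 2} {c : ℕ} (hu : ∀ z, u (z + c) = u z) (a : ℕ) :
    u (a % c) = u a := by
  conv_rhs => rw [show a = a % c + c * (a / c) by rw [Nat.mod_add_div]]
  rw [periodic_mul hu]

lemma periodic_gcd {u : ℕ → ZMod 2} : ∀ (p q : ℕ), (∀ z, u (z + p) = u z) →
    (∀ z, u (z + q) = u z) → ∀ z, u (z + Nat.gcd p q) = u z := by
  intro p
  induction p using Nat.strong_induction_on with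
  | _ p ih =>
    intro q hp hq z
    rcases Nat.eq_zero_or_pos p with h0 | h0
    · subst h0
      rw [Nat.gcd_zero_left]
      exact hq z
    · rw [Nat.gcd_rec]
      have hqp : ∀ w, u (w + q % p) = u w := by
        intro w
        conv_rhs => rw [← hq w]
        rw [show w + q = (w + q % p) + p * (q / p) by
          conv_lhs => rw [← Nat.mod_add_div q p]
          ring]
        rw [periodic_mul hp]
      exact ih (q % p) (Nat.mod_lt _ h0) p hqp hp z

lemma telescope_sum (V : ℕ → ZMod 2) (j : ℕ) :
    ∑ l ∈ range j, (V (l+1) + V l) = V j + V 0 := by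
  induction j with
  | zero =>
    rw [Finset.range_zero, Finset.sum_empty]
    linear_combination (-(V 0)) * two_eq_zero
  | succ j ih =>
    rw [Finset.sum_range_succ, ih]
    linear_combination (V j) * two_eq_zero

/-! ### binomial moments -/

def mu (M l : ℕ) (u : ℕ → ZMod 2) : ZMod 2 := ∑ z ∈ range M, bin2 z l * u z

lemma sum_swap_lt (M : ℕ) (G u : ℕ → ZMod 2) :
    ∑ z ∈ range M, G z * ∑ y ∈ range z, u y
      = ∑ y ∈ range M, (∑ z ∈ Ico (y+1) M, G z) * u y := by
  induction M with
  | zero => simp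
  | succ M ih =>
    rw [Finset.sum_range_succ, ih,
      Finset.sum_range_succ (fun y => (∑ z ∈ Ico (y+1) (M+1), G z) * u y) M]
    have h1 : ∀ y ∈ range M, (∑ z ∈ Ico (y+1) (M+1), G z) * u y
        = (∑ z ∈ Ico (y+1) M, G z) * u y + G M * u y := by
      intro y hy
      rw [Finset.sum_Ico_succ_top (by simp at hy; omega)]
      ring
    rw [Finset.sum_congr rfl h1, Finset.sum_add_distrib]
    have h2 : ∑ z ∈ Ico (M+1) (M+1), G z = 0 := by simp
    rw [h2, zero_mul, add_zero, ← Finset.mul_sum]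

lemma mu_plift (k l : ℕ) (hl : l + 1 < 2^k) (ε : ZMod 2) (u : ℕ → ZMod 2) :
    mu (2^k) l (plift ε u) = mu (2^k) l u + mu (2^k) (l+1) u := by
  unfold mu plift
  have h1 : ∀ z, bin2 z l * (ε + ∑ y ∈ range z, u y)
      = bin2 z l * ε + bin2 z l * ∑ y ∈ range z, u y := fun z => by ring
  rw [Finset.sum_congr rfl (fun z _ => h1 z), Finset.sum_add_distrib]
  have h2 : ∑ z ∈ range (2^k), bin2 z l * ε = 0 := by
    rw [← Finset.sum_mul, sum_range_bin2, bin2_two_pow k (Nat.succ_pos l) hl, zero_mul]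
  rw [h2, zero_add, sum_swap_lt]
  have h3 : ∀ y ∈ range (2^k), (∑ z ∈ Ico (y+1) (2^k), bin2 z l) * u y
      = (bin2 y l + bin2 y (l+1)) * u y := by
    intro y hy
    simp only [Finset.mem_range] at hy
    rw [Finset.sum_Ico_eq_sub _ (by omega)]
    rw [sum_range_bin2, sum_range_bin2, bin2_two_pow k (Nat.succ_pos l) hl]
    rw [bin2_succ_succ]
    linear_combination (-(bin2 y l + bin2 y (l+1)) * u y) * two_eq_zero
  rw [Finset.sum_congr rfl h3]
  rw [← Finset.sum_add_distrib]
  apply Finset.sum_congr rfl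
  intro y _
  ring

lemma mu_antiper (j : ℕ) (u : ℕ → ZMod 2) (hu : ∀ z, u (z + 2^j) = u z + 1)
    {l : ℕ} (hl : l + 1 < 2^j) :
    mu (2^(j+1)) l u = 0 := by
  unfold mu
  have hsplit : (2:ℕ)^(j+1) = 2^j + 2^j := by ring
  rw [hsplit, Finset.sum_range_add]
  have h1 : ∀ z ∈ range (2^j), bin2 (2^j + z) l * u (2^j + z)
      = bin2 z l * u z + bin2 z l := by
    intro z _
    rw [show (2:ℕ)^j + z = z + 2^j by ring, bin2_add_pow_lt z j (by omega), hu]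
    ring
  rw [Finset.sum_congr rfl h1, Finset.sum_add_distrib]
  rw [sum_range_bin2, bin2_two_pow j (Nat.succ_pos l) hl, add_zero]
  rw [← Finset.sum_add_distrib]
  apply Finset.sum_eq_zero
  intro z _
  linear_combination (bin2 z l * u z) * two_eq_zero

lemma sum_plift (j : ℕ) (hj : 1 ≤ j) (ε : ZMod 2) (u : ℕ → ZMod 2) :
    ∑ z ∈ range (2^j), plift ε u z = mu (2^j) 0 u + mu (2^j) 1 u := by
  unfold plift
  rw [Finset.sum_add_distrib]
  have h0 : ∑ _z ∈ range (2^j), ε = ((2^j : ℕ) : ZMod 2) * ε := by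
    rw [Finset.sum_const, Finset.card_range, nsmul_eq_mul]
  have h0' : ((2^j : ℕ) : ZMod 2) = 0 := by
    exact (ZMod.natCast_eq_zero_iff _ 2).2 (dvd_pow_self 2 (by omega))
  rw [h0, h0', zero_mul, zero_add]
  have := sum_swap_lt (2^j) (fun _ => 1) u
  simp only [one_mul] at this
  rw [this]
  unfold mu
  rw [← Finset.sum_add_distrib]
  apply Finset.sum_congr rfl
  intro y hy
  simp only [Finset.mem_range] at hy
  have hcard : ∑ z ∈ Ico (y+1) (2^j), (1 : ZMod 2) = ((2^j - (y+1) : ℕ) : ZMod 2) := by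
    rw [Finset.sum_const, Nat.card_Ico, nsmul_eq_mul, mul_one]
  rw [hcard]
  have hcast : ((2^j - (y+1) : ℕ) : ZMod 2) = ((2^j : ℕ) : ZMod 2) - ((y:ℕ) : ZMod 2) - 1 := by
    rw [Nat.cast_sub (by omega)]
    push_cast
    ring
  rw [hcast, h0', bin2_zero, bin2_one]
  linear_combination ((-(y:ZMod 2) * u y) - u y) * two_eq_zero

/-! ### perfect factor structure -/

structure PF (n k : ℕ) where
  D : Type
  fD : Fintype D
  cardD : Fintype.card D * 2 ^ k = 2 ^ n
  f : D → ℕ → ZMod 2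
  per : ∀ d z, f d (z + 2^k) = f d z
  bij : Function.Bijective (fun p : D × ZMod (2 ^ k) => win n (f p.1) p.2.val)

attribute [instance] PF.fD

lemma win_plift_inj_aux {n : ℕ} {u u' : ℕ → ZMod 2} {ε ε' : ZMod 2} {i i' : ℕ}
    (h : win (n+1) (plift ε u) i = win (n+1) (plift ε' u') i') :
    plift ε u i = plift ε' u' i' ∧ win n u i = win n u' i' := by
  constructor
  · have h0 := congrFun h 0
    simpa [win] using h0
  · funext x
    have hs := congrFun h x.succ
    have hc := congrFun h x.castSucc
    simp only [win, Fin.val_succ, Fin.coe_castSucc] at hs hc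
    have e1 : plift ε u (i + (x.val + 1)) = plift ε u (i + x.val) + u (i + x.val) := by
      rw [show i + (x.val + 1) = (i + x.val) + 1 by omega, plift_succ]
    have e2 : plift ε' u' (i' + (x.val + 1)) = plift ε' u' (i' + x.val) + u' (i' + x.val) := by
      rw [show i' + (x.val + 1) = (i' + x.val) + 1 by omega, plift_succ]
    rw [e1, e2, hc] at hs
    simp only [win]
    exact add_left_cancel hs

lemma win_plift_eq_of {n : ℕ} (u : ℕ → ZMod 2) (ε : ZMod 2) (j : ℕ) (v : Fin (n+1) → ZMod 2)
    (h0 : plift ε u j = v 0)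
    (hw : ∀ x : Fin n, u (j + x.val) = v x.succ + v x.castSucc) :
    win (n+1) (plift ε u) j = v := by
  funext x
  induction x using Fin.induction with
  | zero => simpa [win] using h0
  | succ x ih =>
    simp only [win, Fin.val_succ]
    simp only [win, Fin.coe_castSucc] at ih
    rw [show j + (x.val + 1) = (j + x.val) + 1 by omega, plift_succ, ih, hw x]
    linear_combination (v x.castSucc) * two_eq_zero

/-- lifting an all-even perfect factor: both prefix-sum lifts of each cycle -/
noncomputable def PF.lift {n k : ℕ} (P : PF n k)
    (he : ∀ d, ∑ z ∈ range (2^k), P.f d z = 0) : PF (n+1) k where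
  D := ZMod 2 × P.D
  fD := inferInstance
  cardD := by
    rw [Fintype.card_prod, ZMod.card]
    rw [show (2 : ℕ) * Fintype.card P.D * 2^k = 2 * (Fintype.card P.D * 2^k) by ring,
      P.cardD, pow_succ]
    ring
  f := fun p => plift p.1 (P.f p.2)
  per := by
    intro p z
    show plift p.1 (P.f p.2) (z + 2^k) = plift p.1 (P.f p.2) z
    rw [plift_add, periodic_sum_shift (P.per p.2), he, add_zero]
  bij := by
    constructor
    · rintro ⟨⟨ε, d⟩, i⟩ ⟨⟨ε', d'⟩, i'⟩ h
      obtain ⟨h1, h2⟩ := win_plift_inj_aux h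
      have hP : (⟨d, i⟩ : P.D × ZMod (2^k)) = ⟨d', i'⟩ := P.bij.injective h2
      simp only [Prod.mk.injEq] at hP
      obtain ⟨hd, hi⟩ := hP
      subst hd
      subst hi
      simp only [plift] at h1
      have hε : ε = ε' := add_right_cancel h1
      subst hε
      rfl
    · intro v
      obtain ⟨⟨d, i⟩, hdi⟩ := P.bij.surjective (fun x => v x.succ + v x.castSucc)
      refine ⟨⟨⟨v 0 + ∑ y ∈ range i.val, P.f d y, d⟩, i⟩, ?_⟩
      apply win_plift_eq_of
      · simp only [plift]
        linear_combination (∑ y ∈ range i.val, P.f d y) * two_eq_zero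
      · intro x
        exact congrFun hdi x

lemma win_mod {n c : ℕ} {u : ℕ → ZMod 2} (hu : ∀ z, u (z + c) = u z) (a : ℕ) :
    win n u (a % c) = win n u a := by
  funext x
  simp only [win]
  have hmd := Nat.mod_add_div a c
  conv_rhs => rw [show a + x.val = (a % c + x.val) + c * (a / c) by omega]
  rw [periodic_mul hu]

lemma plift_antiper {k : ℕ} {u : ℕ → ZMod 2} (hper : ∀ z, u (z + 2^k) = u z)
    (ho : ∑ z ∈ range (2^k), u z = 1) (ε : ZMod 2) :
    ∀ z, plift ε u (z + 2^k) = plift ε u z + 1 := by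
  intro z
  rw [plift_add, periodic_sum_shift hper, ho]

lemma val_cases {k : ℕ} (a : ℕ) (ha : a < 2^(k+1)) :
    a = a % 2^k ∨ a = a % 2^k + 2^k := by
  have h1 := Nat.mod_add_div a (2^k)
  have h2 : a / 2^k < 2 := by
    apply Nat.div_lt_of_lt_mul
    rw [show (2:ℕ)^k * 2 = 2^(k+1) by ring]
    exact ha
  generalize hq : a / 2^k = q at h1 h2
  interval_cases q
  · left
    rw [Nat.mul_zero, Nat.add_zero] at h1
    exact h1.symm
  · right
    rw [Nat.mul_one] at h1
    exact h1.symm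

lemma zmod2_ne {a b : ZMod 2} (h : a ≠ b) : a = b + 1 := by
  revert h
  revert a b
  decide

/-- lifting an all-odd perfect factor: period doubles -/
noncomputable def PF.liftOdd {n k : ℕ} (P : PF n k)
    (ho : ∀ d, ∑ z ∈ range (2^k), P.f d z = 1) : PF (n+1) (k+1) where
  D := P.D
  fD := inferInstance
  cardD := by
    rw [pow_succ, ← mul_assoc, P.cardD, ← pow_succ]
  f := fun d => plift 0 (P.f d)
  per := by
    intro d z
    show plift 0 (P.f d) (z + 2^(k+1)) = plift 0 (P.f d) z
    have hs : (2:ℕ)^(k+1) = 2^k + 2^k := by ring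
    rw [hs, ← Nat.add_assoc, plift_antiper (P.per d) (ho d),
      plift_antiper (P.per d) (ho d)]
    linear_combination two_eq_zero
  bij := by
    haveI : NeZero (2^k) := ⟨(pow_pos (by norm_num : (0:ℕ) < 2) k).ne'⟩
    haveI : NeZero (2^(k+1)) := ⟨(pow_pos (by norm_num : (0:ℕ) < 2) (k+1)).ne'⟩
    constructor
    · rintro ⟨d, i⟩ ⟨d', i'⟩ h
      obtain ⟨h1, h2⟩ := win_plift_inj_aux h
      have hm : win n (P.f d) (i.val % 2^k) = win n (P.f d') (i'.val % 2^k) := by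
        rw [win_mod (P.per d), win_mod (P.per d'), h2]
      have hP : (⟨d, ((i.val : ℕ) : ZMod (2^k))⟩ : P.D × ZMod (2^k))
          = ⟨d', ((i'.val : ℕ) : ZMod (2^k))⟩ := by
        apply P.bij.injective
        show win n (P.f d) (((i.val : ℕ) : ZMod (2^k)).val)
            = win n (P.f d') (((i'.val : ℕ) : ZMod (2^k)).val)
        rw [ZMod.val_natCast, ZMod.val_natCast]
        exact hm
      simp only [Prod.mk.injEq] at hP
      obtain ⟨hd, hi⟩ := hP
      subst hd
      have hival : i.val % 2^k = i'.val % 2^k := by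
        have h := congrArg ZMod.val hi
        rwa [ZMod.val_natCast, ZMod.val_natCast] at h
      have hc1 := val_cases i.val (ZMod.val_lt i)
      have hc2 := val_cases i'.val (ZMod.val_lt i')
      have hii : i.val = i'.val := by
        rcases hc1 with e1 | e1 <;> rcases hc2 with e2 | e2
        · omega
        · exfalso
          have := plift_antiper (P.per d) (ho d) 0 (i.val)
          rw [show i.val + 2^k = i'.val by omega] at this
          rw [this] at h1
          simp at h1
        · exfalso
          have := plift_antiper (P.per d) (ho d) 0 (i'.val)
          rw [show i'.val + 2^k = i.val by omega] at this
          rw [this] at h1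
          simp at h1
        · omega
      have hii' : i = i' := ZMod.val_injective _ hii
      rw [hii']
    · intro v
      obtain ⟨⟨d, i₀⟩, hdi⟩ := P.bij.surjective (fun x => v x.succ + v x.castSucc)
      have hi₀ : i₀.val < 2^k := ZMod.val_lt i₀
      by_cases hc : plift 0 (P.f d) i₀.val = v 0
      · refine ⟨⟨d, ((i₀.val : ℕ) : ZMod (2^(k+1)))⟩, ?_⟩
        have hv : ((i₀.val : ℕ) : ZMod (2^(k+1))).val = i₀.val := by
          rw [ZMod.val_natCast, Nat.mod_eq_of_lt]
          calc i₀.val < 2^k := hi₀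
            _ ≤ 2^(k+1) := Nat.pow_le_pow_right (by norm_num) (by omega)
        show win (n+1) (plift 0 (P.f d)) (((i₀.val : ℕ) : ZMod (2^(k+1))).val) = v
        rw [hv]
        apply win_plift_eq_of _ _ _ _ hc
        intro x
        exact congrFun hdi x
      · refine ⟨⟨d, ((i₀.val + 2^k : ℕ) : ZMod (2^(k+1)))⟩, ?_⟩
        have hv : ((i₀.val + 2^k : ℕ) : ZMod (2^(k+1))).val = i₀.val + 2^k := by
          rw [ZMod.val_natCast, Nat.mod_eq_of_lt]
          have : (2:ℕ)^(k+1) = 2^k + 2^k := by ring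
          omega
        show win (n+1) (plift 0 (P.f d)) (((i₀.val + 2^k : ℕ) : ZMod (2^(k+1))).val) = v
        rw [hv]
        apply win_plift_eq_of
        · rw [plift_antiper (P.per d) (ho d)]
          rw [zmod2_ne hc]
          linear_combination two_eq_zero
        · intro x
          rw [show i₀.val + 2^k + x.val = (i₀.val + x.val) + 2^k by omega, P.per d]
          exact congrFun hdi x

/-! ### the de Bruijn tower -/

structure DB (κ : ℕ) where
  β : ℕ → ZMod 2
  per : ∀ z, β (z + 2^κ) = β z
  bij : Function.Bijective (fun i : ZMod (2^κ) => win κ β i.val)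
  mu0 : mu (2^κ) 0 β = 0
  mu1 : mu (2^κ) 1 β = 1
  ones : ∀ j, j < κ → β (1 + j) = 1

lemma mu_zero_spec (M : ℕ) (u : ℕ → ZMod 2) : mu M 0 u = ∑ z ∈ range M, u z := by
  unfold mu
  apply Finset.sum_congr rfl
  intro z _
  rw [bin2_zero, one_mul]

lemma two_pow_ge_add_two {κ : ℕ} (hκ : 2 ≤ κ) : κ + 2 ≤ 2^κ := by
  induction κ with
  | zero => omega
  | succ κ ih =>
    rcases Nat.lt_or_ge κ 2 with h | h
    · interval_cases κ
      · omega
      · norm_num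
    · have h1 := ih h
      have h2 : (2:ℕ)^(κ+1) = 2 * 2^κ := by ring
      omega

lemma mu_half (j : ℕ) (u v : ℕ → ZMod 2) (hv : ∀ z, z < 2^j → u z + u (z + 2^j) = v z)
    {l : ℕ} (hl : l < 2^j) : mu (2^(j+1)) l u = mu (2^j) l v := by
  unfold mu
  have hsplit : (2:ℕ)^(j+1) = 2^j + 2^j := by ring
  rw [hsplit, Finset.sum_range_add, ← Finset.sum_add_distrib]
  apply Finset.sum_congr rfl
  intro z hz
  simp only [Finset.mem_range] at hz
  rw [show (2:ℕ)^j + z = z + 2^j by ring, bin2_add_pow_lt z j hl]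
  rw [← mul_add, hv z hz]

/-- shift invariance of `mu 0` -/
lemma mu0_shift {M : ℕ} {u : ℕ → ZMod 2} (hu : ∀ z, u (z + M) = u z) (c : ℕ) :
    mu M 0 (fun z => u (z + c)) = mu M 0 u := by
  rw [mu_zero_spec, mu_zero_spec]
  have := periodic_sum_shift hu c
  rw [← this]
  apply Finset.sum_congr rfl
  intro z _
  congr 1
  omega

/-- shift invariance of `mu 1` for balanced sequences, even period -/
lemma mu1_shift {M : ℕ} (hM : (M:ZMod 2) = 0) {u : ℕ → ZMod 2} (hu : ∀ z, u (z + M) = u z)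
    (h0 : mu M 0 u = 0) (c : ℕ) :
    mu M 1 (fun z => u (z + c)) = mu M 1 u := by
  induction c with
  | zero => simp
  | succ c ih =>
    set u' : ℕ → ZMod 2 := fun z => u (z + c) with hu'
    have hper' : ∀ z, u' (z + M) = u' z := by
      intro z
      simp only [hu']
      rw [show z + M + c = (z + c) + M by omega, hu]
    have h0' : mu M 0 u' = 0 := by
      rw [hu', mu0_shift hu c, h0]
    have step : mu M 1 (fun z => u' (z + 1)) = mu M 1 u' := by
      unfold mu
      have e1 : ∀ z, bin2 z 1 * u' (z+1) = bin2 (z+1) 1 * u' (z+1) + u' (z+1) := by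
        intro z
        have : bin2 (z+1) 1 = 1 + bin2 z 1 := by
          rw [bin2_succ_succ, bin2_zero]
        rw [this]
        linear_combination (-(u' (z+1))) * two_eq_zero
      rw [Finset.sum_congr rfl (fun z _ => e1 z), Finset.sum_add_distrib]
      have e2 : ∑ z ∈ range M, u' (z + 1) = 0 := by
        have := periodic_sum_shift hper' 1
        have e3 : ∑ y ∈ range M, u' (1 + y) = ∑ z ∈ range M, u' (z + 1) := by
          apply Finset.sum_congr rfl
          intro z _
          congr 1
          omega
        rw [← e3, this, ← mu_zero_spec, h0']
      rw [e2, add_zero]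
      have e4 : ∑ z ∈ range M, bin2 (z+1) 1 * u' (z+1)
          = ∑ w ∈ range (M+1), bin2 w 1 * u' w := by
        rw [Finset.sum_range_succ' (fun w => bin2 w 1 * u' w) M]
        simp [bin2_of_lt]
      rw [e4, Finset.sum_range_succ, bin2_one, hM, zero_mul, add_zero]
    have efin : mu M 1 (fun z => u (z + (c+1))) = mu M 1 (fun z => u' (z + 1)) := by
      unfold mu
      apply Finset.sum_congr rfl
      intro z _
      simp only [hu']
      congr 2
      omega
    rw [efin, step, ih]

/-! ### tower step -/

section TowerStep

variable {κ : ℕ} (B : DB κ) (hκ : 2 ≤ κ)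

private noncomputable def Bf : ℕ → ZMod 2 := plift 0 B.β

lemma Bf_per : ∀ z, Bf B (z + 2^κ) = Bf B z := by
  intro z
  unfold Bf
  rw [plift_add, periodic_sum_shift B.per, ← mu_zero_spec, B.mu0, add_zero]

lemma Bf_succ (z : ℕ) : Bf B (z + 1) = Bf B z + B.β z := plift_succ _ _ z

include hκ

lemma B_zero : B.β 0 = 0 := by
  by_contra h
  have h1 : B.β 0 = 1 := zmod2_ne h
  haveI : NeZero (2^κ) := ⟨(pow_pos (by norm_num : (0:ℕ) < 2) κ).ne'⟩
  have hw : win κ B.β ((0 : ZMod (2^κ)).val) = win κ B.β ((1 : ZMod (2^κ)).val) := by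
    have hv0 : (0 : ZMod (2^κ)).val = 0 := ZMod.val_zero
    have hv1 : (1 : ZMod (2^κ)).val = 1 := by
      rw [ZMod.val_one_eq_one_mod, Nat.mod_eq_of_lt]
      have := two_pow_ge_add_two hκ
      omega
    rw [hv0, hv1]
    funext x
    simp only [win]
    have hx1 : B.β (1 + x.val) = 1 := B.ones x.val x.isLt
    rw [hx1]
    rcases Nat.eq_zero_or_pos x.val with h0 | h0
    · rw [h0]
      simpa using h1
    · rw [show 0 + x.val = 1 + (x.val - 1) by omega, B.ones (x.val - 1) (by omega)]
  have := B.bij.injective hw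
  have hval := congrArg ZMod.val this
  rw [ZMod.val_zero, ZMod.val_one_eq_one_mod, Nat.mod_eq_of_lt (by
    have := two_pow_ge_add_two hκ; omega)] at hval
  omega

lemma Bf_run : ∀ w, 1 ≤ w → w ≤ κ → Bf B w = Bf B (w+1) + 1 := by
  intro w h1 h2
  have : B.β w = 1 := by
    rw [show w = 1 + (w - 1) by omega]
    exact B.ones (w-1) (by omega)
  rw [Bf_succ, this]
  linear_combination (-1 : ZMod 2) * two_eq_zero

lemma Bf_run' : ∀ w, 1 ≤ w % 2^κ → w % 2^κ ≤ κ → Bf B w = Bf B (w+1) + 1 := by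
  intro w h1 h2
  have hp : κ + 2 ≤ 2^κ := two_pow_ge_add_two hκ
  have e1 : Bf B w = Bf B (w % 2^κ) := (periodic_mod (Bf_per B) w).symm
  have e2 : Bf B (w+1) = Bf B (w % 2^κ + 1) := by
    have : (w+1) % 2^κ = w % 2^κ + 1 := by
      rw [Nat.add_mod, Nat.mod_eq_of_lt (show w % 2^κ + 1 % 2^κ < 2^κ by
        have := Nat.mod_lt w (show 0 < 2^κ by positivity)
        have h1m : (1:ℕ) % 2^κ = 1 := Nat.mod_eq_of_lt (by omega)
        omega)]
      congr 1
      exact Nat.mod_eq_of_lt (by omega)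
    rw [← this]
    exact (periodic_mod (Bf_per B) (w+1)).symm
  rw [e1, e2]
  exact Bf_run B hκ _ h1 h2

/-- the merged sequence (cross-join of the two lifts at the canonical pair) -/
private noncomputable def Bg : ℕ → ZMod 2 := fun z =>
  if 1 ≤ z % 2^(κ+1) ∧ z % 2^(κ+1) ≤ 2^κ
  then Bf B (z % 2^(κ+1) + 1) + 1
  else Bf B (z % 2^(κ+1))

omit hκ in
lemma Bg_per : ∀ z, Bg B (z + 2^(κ+1)) = Bg B z := by
  intro z
  unfold Bg
  rw [Nat.add_mod_right]

lemma Bg_key : ∀ T, T < 2^(κ+1) → ∀ x, x ≤ κ →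
    Bg B (T + x) = (if 1 ≤ T ∧ T ≤ 2^κ then Bf B (T + 1 + x) + 1 else Bf B (T + x)) := by
  intro T hT x hx
  have hp : κ + 2 ≤ 2^κ := two_pow_ge_add_two hκ
  have hN : (2:ℕ)^(κ+1) = 2^κ + 2^κ := by ring
  by_cases hseg : 1 ≤ T ∧ T ≤ 2^κ
  · -- main segment
    rw [if_pos hseg]
    have hz : T + x < 2^(κ+1) := by omega
    unfold Bg
    rw [Nat.mod_eq_of_lt hz]
    by_cases hz2 : T + x ≤ 2^κ
    · rw [if_pos ⟨by omega, hz2⟩]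
      congr 2
      omega
    · rw [if_neg (by omega)]
      -- T + x ∈ [2^κ+1, 2^κ+κ] : use extended run
      have hr : 1 ≤ (T + x) % 2^κ ∧ (T + x) % 2^κ ≤ κ := by
        have : (T + x) % 2^κ = T + x - 2^κ := by
          rw [Nat.mod_eq_sub_mod (by omega), Nat.mod_eq_of_lt (by omega)]
        omega
      rw [Bf_run' B hκ _ hr.1 hr.2]
      congr 2
      omega
  · rw [if_neg hseg]
    have hT0 : T = 0 ∨ (2^κ + 1 ≤ T ∧ T < 2^(κ+1)) := by omega
    rcases hT0 with h0 | hhi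
    · subst h0
      simp only [Nat.zero_add]
      unfold Bg
      rw [Nat.mod_eq_of_lt (by omega)]
      by_cases hc : 1 ≤ x ∧ x ≤ 2^κ
      · rw [if_pos hc]
        have := Bf_run B hκ x hc.1 (by omega)
        rw [← this]
      · rw [if_neg hc]
    · -- high segment
      by_cases hz : T + x < 2^(κ+1)
      · unfold Bg
        rw [Nat.mod_eq_of_lt hz, if_neg (by omega)]
      · -- wrap around
        have hr : (T + x) % 2^(κ+1) = T + x - 2^(κ+1) := by
          rw [Nat.mod_eq_sub_mod (by omega), Nat.mod_eq_of_lt (by omega)]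
        have hrlt : T + x - 2^(κ+1) ≤ κ - 1 := by omega
        unfold Bg
        rw [hr]
        set r := T + x - 2^(κ+1) with hrdef
        have hTx : T + x = r + 2^κ + 2^κ := by omega
        by_cases hc : 1 ≤ r
        · rw [if_pos ⟨hc, by omega⟩]
          rw [← Bf_run B hκ r hc (by omega), hTx, Bf_per, Bf_per]
        · rw [if_neg (by omega)]
          rw [hTx, Bf_per, Bf_per]

end TowerStep

section TowerStep2

variable {κ : ℕ} (B : DB κ) (hκ : 2 ≤ κ)

lemma periodic_mod_add {u : ℕ → ZMod 2} {c : ℕ} (hu : ∀ z, u (z + c) = u z) (a b : ℕ) :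
    u (a % c + b) = u (a + b) := by
  have hmd := Nat.mod_add_div a c
  conv_rhs => rw [show a + b = (a % c + b) + c * (a / c) by omega]
  rw [periodic_mul hu]

lemma Bwin_inj {a a' : ℕ}
    (h : win κ B.β a = win κ B.β a') : a % 2^κ = a' % 2^κ := by
  haveI : NeZero (2^κ) := ⟨(pow_pos (by norm_num : (0:ℕ) < 2) κ).ne'⟩
  have hpos : 0 < 2^κ := pow_pos (by norm_num) κ
  have hm : win κ B.β (a % 2^κ) = win κ B.β (a' % 2^κ) := by
    rw [win_mod B.per, win_mod B.per, h]
  have hP : (((a % 2^κ : ℕ) : ZMod (2^κ))) = (((a' % 2^κ : ℕ) : ZMod (2^κ))) := by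
    apply B.bij.injective
    show win κ B.β (((a % 2^κ : ℕ) : ZMod (2^κ)).val)
        = win κ B.β (((a' % 2^κ : ℕ) : ZMod (2^κ)).val)
    rw [ZMod.val_natCast, ZMod.val_natCast,
      Nat.mod_eq_of_lt (Nat.mod_lt _ hpos), Nat.mod_eq_of_lt (Nat.mod_lt _ hpos)]
    exact hm
  have hv := congrArg ZMod.val hP
  rwa [ZMod.val_natCast, ZMod.val_natCast,
    Nat.mod_eq_of_lt (Nat.mod_lt _ hpos), Nat.mod_eq_of_lt (Nat.mod_lt _ hpos)] at hv

lemma Bf_win_inj {a a' : ℕ}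
    (h : win (κ+1) (Bf B) a = win (κ+1) (Bf B) a') : a % 2^κ = a' % 2^κ := by
  have h' : win (κ+1) (plift 0 B.β) a = win (κ+1) (plift 0 B.β) a' := h
  obtain ⟨h1, h2⟩ := win_plift_inj_aux h'
  exact Bwin_inj B h2

lemma Bf_win_ncompl {a a' : ℕ}
    (h : win (κ+1) (Bf B) a = fun x => win (κ+1) (Bf B) a' x + 1) : False := by
  have hrw : (fun x : Fin (κ+1) => win (κ+1) (Bf B) a' x + 1) = win (κ+1) (plift 1 B.β) a' := by
    funext x
    show Bf B (a' + x.val) + 1 = plift 1 B.β (a' + x.val)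
    simp only [Bf, plift]
    ring
  rw [hrw] at h
  have h' : win (κ+1) (plift 0 B.β) a = win (κ+1) (plift 1 B.β) a' := h
  obtain ⟨h1, h2⟩ := win_plift_inj_aux h'
  have hmods := Bwin_inj B h2
  have hf : plift 0 B.β a = plift 0 B.β a' := by
    have p1 : plift 0 B.β (a % 2^κ) = plift 0 B.β a := periodic_mod (Bf_per B) a
    have p2 : plift 0 B.β (a' % 2^κ) = plift 0 B.β a' := periodic_mod (Bf_per B) a'
    rw [← p1, ← p2, hmods]
  have hcontr : plift 1 B.β a' = plift 0 B.β a' + 1 := by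
    simp only [plift]
    ring
  rw [hcontr] at h1
  exact zero_ne_one (by linear_combination h1 - hf)

include hκ in
lemma Bg_win_form (i : ZMod (2^(κ+1))) :
    win (κ+1) (Bg B) i.val
      = if 1 ≤ i.val ∧ i.val ≤ 2^κ
        then (fun x => win (κ+1) (Bf B) (i.val + 1) x + 1)
        else win (κ+1) (Bf B) i.val := by
  haveI : NeZero (2^(κ+1)) := ⟨(pow_pos (by norm_num : (0:ℕ) < 2) (κ+1)).ne'⟩
  have hT : i.val < 2^(κ+1) := ZMod.val_lt i
  by_cases hseg : 1 ≤ i.val ∧ i.val ≤ 2^κ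
  · rw [if_pos hseg]
    funext x
    have hk := Bg_key B hκ i.val hT x.val (by omega)
    rw [if_pos hseg] at hk
    show Bg B (i.val + x.val) = Bf B (i.val + 1 + x.val) + 1
    exact hk
  · rw [if_neg hseg]
    funext x
    have hk := Bg_key B hκ i.val hT x.val (by omega)
    rw [if_neg hseg] at hk
    exact hk

include hκ in
lemma Bg_win_inj : Function.Injective (fun i : ZMod (2^(κ+1)) => win (κ+1) (Bg B) i.val) := by
  haveI : NeZero (2^(κ+1)) := ⟨(pow_pos (by norm_num : (0:ℕ) < 2) (κ+1)).ne'⟩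
  intro i i' h
  simp only at h
  rw [Bg_win_form B hκ, Bg_win_form B hκ] at h
  have hp : κ + 2 ≤ 2^κ := two_pow_ge_add_two hκ
  have hv : i.val < 2^(κ+1) := ZMod.val_lt i
  have hv' : i'.val < 2^(κ+1) := ZMod.val_lt i'
  have hN : (2:ℕ)^(κ+1) = 2^κ + 2^κ := by ring
  have hpos : 0 < 2^κ := pow_pos (by norm_num) κ
  apply ZMod.val_injective
  by_cases c1 : 1 ≤ i.val ∧ i.val ≤ 2^κ <;> by_cases c2 : 1 ≤ i'.val ∧ i'.val ≤ 2^κ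
  · rw [if_pos c1, if_pos c2] at h
    have h' : win (κ+1) (Bf B) (i.val + 1) = win (κ+1) (Bf B) (i'.val + 1) := by
      funext x
      have := congrFun h x
      exact add_right_cancel this
    have hmods := Bf_win_inj B h'
    have hc1 := val_cases (k := κ) (i.val + 1) (by omega)
    have hc2 := val_cases (k := κ) (i'.val + 1) (by omega)
    have hm1 : (i.val + 1) % 2^κ < 2^κ := Nat.mod_lt _ hpos
    have hm2 : (i'.val + 1) % 2^κ < 2^κ := Nat.mod_lt _ hpos
    omega
  · rw [if_pos c1, if_neg c2] at h
    exact absurd h.symm (fun hh => Bf_win_ncompl B hh)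
  · rw [if_neg c1, if_pos c2] at h
    exact absurd h (fun hh => Bf_win_ncompl B hh)
  · rw [if_neg c1, if_neg c2] at h
    have hmods := Bf_win_inj B h
    have hc1 := val_cases (k := κ) i.val (by omega)
    have hc2 := val_cases (k := κ) i'.val (by omega)
    have hm1 : i.val % 2^κ < 2^κ := Nat.mod_lt _ hpos
    have hm2 : i'.val % 2^κ < 2^κ := Nat.mod_lt _ hpos
    omega

end TowerStep2

section TowerStep3

variable {κ : ℕ} (B : DB κ) (hκ : 2 ≤ κ)

include hκ in
lemma Bg_win_bij :
    Function.Bijective (fun i : ZMod (2^(κ+1)) => win (κ+1) (Bg B) i.val) := by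
  rw [Fintype.bijective_iff_injective_and_card]
  refine ⟨Bg_win_inj B hκ, ?_⟩
  rw [ZMod.card]
  rw [Fintype.card_fun]
  simp [ZMod.card]

lemma mu_add_one (M l : ℕ) (u : ℕ → ZMod 2) :
    mu M l (fun z => u z + 1) = mu M l u + bin2 M (l+1) := by
  unfold mu
  rw [← sum_range_bin2, ← Finset.sum_add_distrib]
  apply Finset.sum_congr rfl
  intro z _
  ring

include hκ in
lemma Bg_v : ∀ z, z < 2^κ → Bg B z + Bg B (z + 2^κ) = B.β z + 1 := by
  intro z hz
  have hp : κ + 2 ≤ 2^κ := two_pow_ge_add_two hκ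
  have hN : (2:ℕ)^(κ+1) = 2^κ + 2^κ := by ring
  have hs1 := Bf_succ B z
  rcases Nat.eq_zero_or_pos z with h0 | h1
  · subst h0
    have e1 : Bg B 0 = Bf B 0 := by
      unfold Bg
      rw [Nat.zero_mod, if_neg (by omega)]
    have e2 : Bg B (0 + 2^κ) = Bf B 1 + 1 := by
      unfold Bg
      rw [Nat.zero_add, Nat.mod_eq_of_lt (by omega), if_pos ⟨Nat.one_le_two_pow, le_refl _⟩]
      rw [show (2:ℕ)^κ + 1 = 1 + 2^κ by ring, Bf_per]
    rw [e1, e2, hs1]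
    linear_combination (Bf B 0) * two_eq_zero
  · have e1 : Bg B z = Bf B (z+1) + 1 := by
      unfold Bg
      rw [Nat.mod_eq_of_lt (by omega), if_pos ⟨h1, by omega⟩]
    have e2 : Bg B (z + 2^κ) = Bf B z := by
      unfold Bg
      rw [Nat.mod_eq_of_lt (by omega), if_neg (by omega), Bf_per]
    rw [e1, e2, hs1]
    linear_combination (Bf B z) * two_eq_zero

include hκ in
lemma Bg_mu0 : mu (2^(κ+1)) 0 (Bg B) = 0 := by
  rw [mu_half κ (Bg B) (fun z => B.β z + 1) (Bg_v B hκ) (pow_pos (by norm_num) κ)]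
  rw [mu_add_one, B.mu0, zero_add]
  rw [show bin2 (2^κ) (0+1) = (((2:ℕ)^κ : ℕ) : ZMod 2) from bin2_one _]
  exact (ZMod.natCast_eq_zero_iff _ 2).2 (dvd_pow_self 2 (by omega))

include hκ in
lemma Bg_mu1 : mu (2^(κ+1)) 1 (Bg B) = 1 := by
  rw [mu_half κ (Bg B) (fun z => B.β z + 1) (Bg_v B hκ) (by
    calc 1 < 2^2 := by norm_num
    _ ≤ 2^κ := Nat.pow_le_pow_right (by norm_num) hκ)]
  rw [mu_add_one, B.mu1]
  rw [bin2_two_pow κ (by norm_num) (by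
    calc 1+1 < 2^2 := by norm_num
    _ ≤ 2^κ := Nat.pow_le_pow_right (by norm_num) hκ), add_zero]

noncomputable def DB.stepAux (y : ZMod (2^(κ+1)))
    (hy : win (κ+1) (Bg B) y.val = fun _ => 1) : DB (κ+1) where
  β := fun z => Bg B (z + (y - 1).val)
  per := by
    intro z
    show Bg B (z + 2^(κ+1) + (y-1).val) = Bg B (z + (y-1).val)
    rw [show z + 2^(κ+1) + (y-1).val = (z + (y-1).val) + 2^(κ+1) by omega, Bg_per]
  bij := by
    haveI : NeZero (2^(κ+1)) := ⟨(pow_pos (by norm_num : (0:ℕ) < 2) (κ+1)).ne'⟩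
    have hmap : (fun i : ZMod (2^(κ+1)) => win (κ+1) (fun z => Bg B (z + (y-1).val)) i.val)
        = (fun i : ZMod (2^(κ+1)) => win (κ+1) (Bg B) i.val) ∘ (fun i => i + (y-1)) := by
      funext i
      funext x
      show Bg B (i.val + x.val + (y-1).val) = Bg B ((i + (y-1)).val + x.val)
      have hval : (i + (y-1)).val = (i.val + (y-1).val) % 2^(κ+1) := ZMod.val_add i (y-1)
      rw [hval, periodic_mod_add (Bg_per B)]
      congr 1
      omega
    rw [hmap]
    exact (Bg_win_bij B hκ).comp (Equiv.addRight (y-1)).bijective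
  mu0 := by
    rw [show (fun z => Bg B (z + (y-1).val)) = fun z => Bg B (z + (y-1).val) from rfl]
    rw [mu0_shift (Bg_per B) ((y-1).val)]
    exact Bg_mu0 B hκ
  mu1 := by
    have hM : (((2:ℕ)^(κ+1) : ℕ) : ZMod 2) = 0 :=
      (ZMod.natCast_eq_zero_iff _ 2).2 (dvd_pow_self 2 (by omega))
    rw [mu1_shift hM (Bg_per B) (Bg_mu0 B hκ) ((y-1).val)]
    exact Bg_mu1 B hκ
  ones := by
    intro j hj
    haveI : NeZero (2^(κ+1)) := ⟨(pow_pos (by norm_num : (0:ℕ) < 2) (κ+1)).ne'⟩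
    have hc : (1 + (y-1).val) % 2^(κ+1) = y.val := by
      have e1 : ((1 + (y-1).val : ℕ) : ZMod (2^(κ+1))) = y := by
        push_cast
        rw [ZMod.natCast_val, ZMod.cast_id]
        ring
      have := congrArg ZMod.val e1
      rwa [ZMod.val_natCast] at this
    have e2 : Bg B (1 + j + (y-1).val) = Bg B ((1 + (y-1).val) % 2^(κ+1) + j) := by
      rw [periodic_mod_add (Bg_per B)]
      congr 1
      omega
    show Bg B (1 + j + (y-1).val) = 1
    rw [e2, hc]
    have := congrFun hy ⟨j, hj⟩
    simpa [win] using this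

end TowerStep3

noncomputable def DB.step {κ : ℕ} (B : DB κ) (hκ : 2 ≤ κ) : DB (κ+1) :=
  DB.stepAux B hκ (Classical.choose ((Bg_win_bij B hκ).surjective (fun _ => 1)))
    (Classical.choose_spec ((Bg_win_bij B hκ).surjective (fun _ => 1)))

noncomputable def dbBase : DB 2 where
  β := fun z => if z % 4 = 1 ∨ z % 4 = 2 then 1 else 0
  per := by
    intro z
    show (if (z + 2^2) % 4 = 1 ∨ (z + 2^2) % 4 = 2 then (1:ZMod 2) else 0) = _
    norm_num [Nat.add_mod_right]
  bij := by decide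
  mu0 := by decide
  mu1 := by decide
  ones := by decide

noncomputable def tower : (j : ℕ) → DB (j + 2)
  | 0 => dbBase
  | (j+1) => DB.step (tower j) (by omega)

noncomputable def DBof (κ : ℕ) (hκ : 2 ≤ κ) : DB κ :=
  (show κ - 2 + 2 = κ by omega) ▸ tower (κ - 2)

/-! ### the chain of perfect factors for small window height -/

noncomputable def DB.toPF {κ : ℕ} (B : DB κ) : PF κ κ where
  D := Unit
  fD := inferInstance
  cardD := by simp
  f := fun _ => B.β
  per := fun _ => B.per
  bij := by
    constructor
    · rintro ⟨⟨⟩, i⟩ ⟨⟨⟩, i'⟩ h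
      have : i = i' := B.bij.injective h
      rw [this]
    · intro v
      obtain ⟨i, hi⟩ := B.bij.surjective v
      exact ⟨⟨(), i⟩, hi⟩

noncomputable def pairPF {κ : ℕ} (B : DB κ) : PF (κ+1) κ :=
  (DB.toPF B).lift (fun _ => by
    rw [← mu_zero_spec]
    exact B.mu0)

lemma pairPF_odd {κ : ℕ} (B : DB κ) (hκ : 2 ≤ κ) :
    ∀ d, ∑ z ∈ range (2^κ), (pairPF B).f d z = 1 := by
  intro d
  show ∑ z ∈ range (2^κ), plift d.1 B.β z = 1
  rw [sum_plift κ (by omega) d.1 B.β, B.mu0, B.mu1, zero_add]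

noncomputable def chainBase {κ : ℕ} (B : DB κ) (hκ : 2 ≤ κ) : PF (κ+2) (κ+1) :=
  (pairPF B).liftOdd (pairPF_odd B hκ)

lemma chainBase_antiper {κ : ℕ} (B : DB κ) (hκ : 2 ≤ κ) :
    ∀ d z, (chainBase B hκ).f d (z + 2^κ) = (chainBase B hκ).f d z + 1 := by
  intro d z
  show plift 0 ((pairPF B).f d) (z + 2^κ) = plift 0 ((pairPF B).f d) z + 1
  exact plift_antiper ((pairPF B).per d) (pairPF_odd B hκ d) 0 z

lemma chainBase_mu {κ : ℕ} (B : DB κ) (hκ : 2 ≤ κ) :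
    ∀ d l, l + 2 ≤ 2^κ → mu (2^(κ+1)) l ((chainBase B hκ).f d) = 0 := by
  intro d l hl
  exact mu_antiper κ _ (chainBase_antiper B hκ d) (by omega)

lemma chainAux {κ : ℕ} (hκ : 2 ≤ κ) : ∀ j : ℕ, j + 2 ≤ 2^κ →
    ∃ P : PF (κ+2+j) (κ+1), ∀ d l, l + j + 2 ≤ 2^κ → mu (2^(κ+1)) l (P.f d) = 0 := by
  intro j
  induction j with
  | zero =>
    intro _
    exact ⟨chainBase (DBof κ hκ) hκ, fun d l hl =>
      chainBase_mu (DBof κ hκ) hκ d l (by omega)⟩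
  | succ j ih =>
    intro hj
    obtain ⟨P, hP⟩ := ih (by omega)
    have he : ∀ d, ∑ z ∈ range (2^(κ+1)), P.f d z = 0 := by
      intro d
      rw [← mu_zero_spec]
      exact hP d 0 (by omega)
    refine ⟨P.lift he, ?_⟩
    rintro ⟨ε, d⟩ l hl
    show mu (2^(κ+1)) l (plift ε (P.f d)) = 0
    rw [mu_plift (κ+1) l (by
      have h2 : (2:ℕ)^(κ+1) = 2 * 2^κ := by ring
      have h3 := pow_pos (show (0:ℕ) < 2 by norm_num) κ
      omega)]
    rw [hP d l (by omega), hP d (l+1) (by omega), add_zero]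

/-! ### affine perfect factor for large windows -/

def AffSol (n : ℕ) : Type := {g : ℕ → ZMod 2 // ∀ z, dpow n g z = 1}

lemma aff_solve {n : ℕ} (g : ℕ → ZMod 2) (hg : ∀ z, dpow n g z = 1) (w : ℕ) :
    g (w + n) = 1 + ∑ l ∈ range n, bin2 n l * g (w + l) := by
  have h := hg w
  rw [dpow, Finset.sum_range_succ, bin2_self, one_mul] at h
  linear_combination h - (∑ l ∈ range n, bin2 n l * g (w + l)) * two_eq_zero

noncomputable def gdef (n : ℕ) (w : Fin n → ZMod 2) : ℕ → ZMod 2 := fun z =>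
  if h : z < n then w ⟨z, h⟩
  else 1 + ∑ l ∈ (range n).attach, bin2 n l.1 * gdef n w (z - n + l.1)
  decreasing_by
    have hl := l.2
    simp only [Finset.mem_range] at hl
    omega

lemma gdef_lt {n : ℕ} (w : Fin n → ZMod 2) (z : ℕ) (h : z < n) :
    gdef n w z = w ⟨z, h⟩ := by
  rw [gdef, dif_pos h]

lemma gdef_ge {n : ℕ} (w : Fin n → ZMod 2) (z : ℕ) (h : ¬ z < n) :
    gdef n w z = 1 + ∑ l ∈ range n, bin2 n l * gdef n w (z - n + l) := by
  rw [gdef, dif_neg h]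
  congr 1
  rw [← Finset.sum_attach (range n) (fun l => bin2 n l * gdef n w (z - n + l))]

lemma gdef_dpow {n : ℕ} (w : Fin n → ZMod 2) : ∀ z, dpow n (gdef n w) z = 1 := by
  intro z
  rw [dpow, Finset.sum_range_succ, bin2_self, one_mul]
  have h1 : gdef n w (z + n) = 1 + ∑ l ∈ range n, bin2 n l * gdef n w (z + l) := by
    rw [gdef_ge w (z+n) (by omega)]
    congr 1
    apply Finset.sum_congr rfl
    intro l hl
    simp only [Finset.mem_range] at hl
    congr 2
    omega
  rw [h1]
  linear_combination (∑ l ∈ range n, bin2 n l * gdef n w (z + l)) * two_eq_zero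

lemma aff_win_bij {n : ℕ} (hn : 0 < n) :
    Function.Bijective (fun g : AffSol n => win n g.1 0) := by
  constructor
  · rintro ⟨g, hg⟩ ⟨g', hg'⟩ h
    have hall : ∀ z, g z = g' z := by
      intro z
      induction z using Nat.strong_induction_on with
      | _ z ih =>
        by_cases hz : z < n
        · have := congrFun h ⟨z, hz⟩
          simpa [win] using this
        · have e1 := aff_solve g hg (z - n)
          have e2 := aff_solve g' hg' (z - n)
          rw [show z - n + n = z by omega] at e1 e2
          rw [e1, e2]
          congr 1
          apply Finset.sum_congr rfl
          intro l hl
          simp only [Finset.mem_range] at hl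
          rw [ih (z - n + l) (by omega)]
    exact Subtype.ext (funext hall)
  · intro v
    refine ⟨⟨gdef n v, gdef_dpow v⟩, ?_⟩
    funext x
    show gdef n v (0 + x.val) = v x
    rw [Nat.zero_add, gdef_lt v x.val x.isLt]

section Affine

variable (n k : ℕ)

lemma aff_per (h2 : n < 2^k) (g : AffSol n) : ∀ z, g.1 (z + 2^k) = g.1 z :=
  periodic_of_dpow_one h2 g.1 g.2

def sA (h2 : n < 2^k) : Setoid (AffSol n) where
  r := fun g g' => ∃ c : ℕ, ∀ z, g.1 (z + c) = g'.1 z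
  iseqv := by
    constructor
    · intro g
      exact ⟨0, fun z => rfl⟩
    · rintro g g' ⟨c, hc⟩
      refine ⟨2^k * (c+1) - c, fun z => ?_⟩
      have e1 : g'.1 (z + (2^k * (c+1) - c)) = g.1 (z + (2^k * (c+1) - c) + c) := (hc _).symm
      rw [e1, show z + (2^k * (c+1) - c) + c = z + 2^k * (c+1) by
        have : c ≤ 2^k * (c+1) := by nlinarith [Nat.one_le_two_pow (n := k)]
        omega]
      exact periodic_mul (aff_per n k h2 g) (c+1) z
    · rintro g g' g'' ⟨c, hc⟩ ⟨c', hc'⟩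
      refine ⟨c' + c, fun z => ?_⟩
      rw [show z + (c' + c) = (z + c') + c by omega, hc, hc']

noncomputable def fintypeAffSol (hn : 0 < n) : Fintype (AffSol n) :=
  Fintype.ofEquiv _ (Equiv.ofBijective _ (aff_win_bij hn)).symm

end Affine

section Affine2

variable (n k : ℕ)

lemma dvd_half {d k : ℕ} (hd : d ∣ 2^k) (hlt : d < 2^k) : d ∣ 2^(k-1) := by
  obtain ⟨a, ha, hda⟩ := (Nat.dvd_prime_pow Nat.prime_two).1 hd
  subst hda
  have hak : a ≠ k := by
    rintro rfl
    omega
  exact pow_dvd_pow 2 (by omega)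

lemma aff_aperiodic (h1 : 2^(k-1) ≤ n) (h2 : n < 2^k) (g : AffSol n)
    {p : ℕ} (hp : 0 < p) (hplt : p < 2^k) (hper : ∀ w, g.1 (w + p) = g.1 w) : False := by
  have hgcd : ∀ w, g.1 (w + Nat.gcd p (2^k)) = g.1 w :=
    periodic_gcd p (2^k) hper (aff_per n k h2 g)
  set d := Nat.gcd p (2^k) with hddef
  have hdpos : 0 < d := Nat.gcd_pos_of_pos_left _ hp
  have hdvd : d ∣ 2^k := Nat.gcd_dvd_right _ _
  have hdle : d ≤ p := Nat.le_of_dvd hp (Nat.gcd_dvd_left _ _)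
  obtain ⟨m, hm⟩ := dvd_half hdvd (by omega)
  have hperH : ∀ w, g.1 (w + 2^(k-1)) = g.1 w := by
    intro w
    rw [hm]
    exact periodic_mul hgcd m w
  exact not_periodic_of_dpow_one h1 g.1 g.2 hperH

def rotA (c : ℕ) (g : AffSol n) : AffSol n :=
  ⟨fun z => g.1 (z + c), by
    intro z
    have he : dpow n (fun z => g.1 (z + c)) z = dpow n g.1 (z + c) := by
      unfold dpow
      apply Finset.sum_congr rfl
      intro l _
      show bin2 n l * g.1 ((z + l) + c) = bin2 n l * g.1 ((z + c) + l)
      rw [show (z + l) + c = (z + c) + l by omega]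
    rw [he, g.2]⟩

lemma rotA_rel (h2 : n < 2^k) (c : ℕ) (g : AffSol n) :
    (sA n k h2).r g (rotA n c g) := ⟨c, fun _ => rfl⟩

lemma aff_no_two_shifts (h1 : 2^(k-1) ≤ n) (h2 : n < 2^k) (x : AffSol n) {a b : ℕ}
    (hb : b < 2^k) (hab : a < b) (hv : ∀ z, x.1 (z + a) = x.1 (z + b)) : False := by
  set p := b - a with hpdef
  have hperiod : ∀ w, x.1 (w + p) = x.1 w := by
    intro w
    have hz := hv (w + 2^k - a)
    rw [show w + 2^k - a + a = w + 2^k by omega,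
      show w + 2^k - a + b = (w + p) + 2^k by omega] at hz
    rw [aff_per n k h2 x (w+p)] at hz
    rw [aff_per n k h2 x w] at hz
    exact hz.symm
  exact aff_aperiodic n k h1 h2 x (by omega) (by omega) hperiod

lemma affT_bij (h1 : 2^(k-1) ≤ n) (h2 : n < 2^k) :
    Function.Bijective
      (fun p : Quotient (sA n k h2) × ZMod (2^k) => rotA n p.2.val p.1.out) := by
  haveI : NeZero (2^k) := ⟨(pow_pos (by norm_num : (0:ℕ) < 2) k).ne'⟩
  constructor
  · rintro ⟨q, c⟩ ⟨q', c'⟩ h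
    simp only at h
    have hq : q = q' := by
      have e1 : ⟦rotA n c.val q.out⟧ = q := by
        rw [← Quotient.sound (rotA_rel n k h2 c.val q.out), Quotient.out_eq]
      have e2 : ⟦rotA n c'.val q'.out⟧ = q' := by
        rw [← Quotient.sound (rotA_rel n k h2 c'.val q'.out), Quotient.out_eq]
      rw [← e1, ← e2, h]
    subst hq
    have hvals : ∀ z, q.out.1 (z + c.val) = q.out.1 (z + c'.val) := by
      intro z
      have := congrArg Subtype.val h
      exact congrFun this z
    have hcc : c.val = c'.val := by
      rcases Nat.lt_trichotomy c.val c'.val with hlt | heq | hgt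
      · exact absurd hvals (fun hv =>
          aff_no_two_shifts n k h1 h2 q.out (ZMod.val_lt c') hlt hv)
      · exact heq
      · exact absurd (fun z => (hvals z).symm) (fun hv =>
          aff_no_two_shifts n k h1 h2 q.out (ZMod.val_lt c) hgt hv)
    have : c = c' := ZMod.val_injective _ hcc
    rw [this]
  · intro x
    have hrel : (sA n k h2).r (Quotient.out ⟦x⟧) x := Quotient.mk_out x
    obtain ⟨c, hc⟩ := hrel
    refine ⟨⟨⟦x⟧, ((c : ℕ) : ZMod (2^k))⟩, ?_⟩
    simp only
    apply Subtype.ext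
    funext z
    show (((⟦x⟧ : Quotient (sA n k h2))).out).1 (z + ((c : ℕ) : ZMod (2^k)).val) = x.1 z
    rw [ZMod.val_natCast]
    have e3 : (((⟦x⟧ : Quotient (sA n k h2))).out).1 (z + c % 2^k) = (((⟦x⟧ : Quotient (sA n k h2))).out).1 (z + c) := by
      have e4 := periodic_mod_add (c := 2^k) (aff_per n k h2 ((⟦x⟧ : Quotient (sA n k h2))).out) c z
      rw [show c % 2^k + z = z + c % 2^k by omega, show c + z = z + c by omega] at e4
      exact e4
    rw [e3, hc]

noncomputable def affinePF (hk : 1 ≤ k) (h1 : 2^(k-1) ≤ n) (h2 : n < 2^k) : PF n k :=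
  haveI hn : 0 < n := lt_of_lt_of_le (pow_pos (by norm_num) (k-1)) h1
  letI : Fintype (AffSol n) := fintypeAffSol n hn
  letI : Fintype (Quotient (sA n k h2)) :=
    @Quotient.fintype _ _ (sA n k h2) (fun _ _ => Classical.propDecidable _)
  { D := Quotient (sA n k h2)
    fD := inferInstance
    cardD := by
      have hcomp := Fintype.card_of_bijective (affT_bij n k h1 h2)
      rw [Fintype.card_prod, ZMod.card] at hcomp
      have hAff : Fintype.card (AffSol n) = 2^n := by
        rw [Fintype.card_of_bijective (aff_win_bij hn), Fintype.card_fun]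
        simp [ZMod.card]
      rw [← hAff]
      exact hcomp
    f := fun q => q.out.1
    per := fun q => aff_per n k h2 q.out
    bij := by
      have hfun : (fun p : Quotient (sA n k h2) × ZMod (2^k) => win n (p.1.out.1) p.2.val)
          = (fun g : AffSol n => win n g.1 0) ∘
            (fun p : Quotient (sA n k h2) × ZMod (2^k) => rotA n p.2.val p.1.out) := by
        funext p
        funext x
        show p.1.out.1 (p.2.val + x.val) = (rotA n p.2.val p.1.out).1 (0 + x.val)
        show p.1.out.1 (p.2.val + x.val) = p.1.out.1 (0 + x.val + p.2.val)
        have e : (0:ℕ) + x.val + p.2.val = p.2.val + x.val := by omega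
        rw [e]
      rw [hfun]
      exact (aff_win_bij hn).comp (affT_bij n k h1 h2) }

end Affine2

/-! ### generic finite sums helpers -/

lemma sum_split_at {α M : Type*} [Fintype α] [DecidableEq α] [AddCommMonoid M]
    (a : α) (f : α → M) :
    ∑ b, f b = f a + ∑ b : {b : α // b ≠ a}, f b.1 := by
  classical
  have h1 : ∑ b : {b : α // b ≠ a}, f b.1 = ∑ b ∈ Finset.univ.erase a, f b :=
    (Finset.sum_subtype (Finset.univ.erase a) (fun x => by simp) f).symm
  rw [h1, ← Finset.sum_erase_add Finset.univ f (Finset.mem_univ a)]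
  rw [add_comm]

lemma card_subtype_ne {α : Type*} [Fintype α] [DecidableEq α] (a : α) :
    Fintype.card {b : α // b ≠ a} = Fintype.card α - 1 := by
  classical
  rw [Fintype.card_subtype]
  rw [Finset.filter_ne']
  rw [Finset.card_erase_of_mem (Finset.mem_univ a)]
  rfl

lemma vec_add_self {m : ℕ} (v : Fin m → ZMod 2) : v + v = 0 := by
  funext i
  show v i + v i = 0
  linear_combination (v i) * two_eq_zero

/-! ### rotation-invariant sums vanish -/

lemma sum_eq_zero_of_rot_invariant {t m' : ℕ} (x : ZMod (2^t) → (Fin m' → ZMod 2))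
    {j : ZMod (2^t)} (hj : j ≠ 0) (hx : ∀ b, x (b + j) = x b) : ∑ b, x b = 0 := by
  classical
  haveI : NeZero (2^t) := ⟨(pow_pos (by norm_num : (0:ℕ) < 2) t).ne'⟩
  set o := addOrderOf j with ho
  have ho_dvd : o ∣ 2^t := by
    have h := addOrderOf_dvd_card (x := j)
    rwa [ZMod.card] at h
  have ho1 : o ≠ 1 := by
    intro h
    have h0 := addOrderOf_nsmul_eq_zero j
    rw [← ho, h, one_nsmul] at h0
    exact hj h0
  have ho_pos : 0 < o := addOrderOf_pos j
  have ho_even : 2 ∣ o := by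
    obtain ⟨a, _, hoa⟩ := (Nat.dvd_prime_pow Nat.prime_two).1 ho_dvd
    have ha0 : a ≠ 0 := by
      rintro rfl
      rw [pow_zero] at hoa
      exact ho1 hoa
    rw [hoa]
    exact dvd_pow_self 2 ha0
  set u := (o / 2) • j with hu
  have hu2 : u + u = 0 := by
    rw [hu, ← add_nsmul, show o/2 + o/2 = o by omega]
    exact addOrderOf_nsmul_eq_zero j
  have hune : u ≠ 0 := by
    intro h
    have hdvd := addOrderOf_dvd_iff_nsmul_eq_zero.2 h
    rw [← ho] at hdvd
    have := Nat.le_of_dvd (by omega) hdvd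
    omega
  have hmul : ∀ (l : ℕ) (b : ZMod (2^t)), x (b + l • j) = x b := by
    intro l
    induction l with
    | zero => intro b; simp
    | succ l ih =>
      intro b
      rw [succ_nsmul, ← add_assoc, hx, ih]
  have hxu : ∀ b, x (b + u) = x b := fun b => hmul (o/2) b
  apply Finset.sum_involution (g := fun b _ => b + u)
  · intro b _
    rw [hxu]
    exact vec_add_self (x b)
  · intro b _ _ hb
    exact hune (by
      have := hb
      rwa [add_eq_left] at this)
  · intro b _
    exact Finset.mem_univ _
  · intro b _
    rw [add_assoc, hu2, add_zero]

section Horizontal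

variable (t m' : ℕ)

def Xset (δ : Fin m' → ZMod 2) : Type :=
  {c : ZMod (2^t) → (Fin m' → ZMod 2) // ∑ b, c b = δ}

noncomputable instance XsetFintype (δ : Fin m' → ZMod 2) : Fintype (Xset t m' δ) := by
  classical
  unfold Xset
  infer_instance

lemma vec_neg {m' : ℕ} (v : Fin m' → ZMod 2) : -v = v := by
  funext i
  show -(v i) = v i
  linear_combination (-(v i)) * two_eq_zero

lemma Xset_card (δ : Fin m' → ZMod 2) :
    Fintype.card (Xset t m' δ) = (2^m')^(2^t - 1) := by
  classical
  haveI : NeZero (2^t) := ⟨(pow_pos (by norm_num : (0:ℕ) < 2) t).ne'⟩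
  have hbij : Function.Bijective
      (fun (c : Xset t m' δ) (b : {b : ZMod (2^t) // b ≠ 0}) => c.1 b.1) := by
    constructor
    · rintro ⟨c, hc⟩ ⟨c', hc'⟩ h
      simp only at h
      apply Subtype.ext
      funext b
      by_cases hb : b = 0
      · subst hb
        have e1 := sum_split_at (0 : ZMod (2^t)) c
        have e2 := sum_split_at (0 : ZMod (2^t)) c'
        rw [hc] at e1
        rw [hc'] at e2
        have e3 : ∑ b : {b : ZMod (2^t) // b ≠ 0}, c b.1
            = ∑ b : {b : ZMod (2^t) // b ≠ 0}, c' b.1 := by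
          apply Finset.sum_congr rfl
          intro b _
          exact congrFun h b
        have e4 := e1.symm.trans e2
        rw [e3] at e4
        exact add_right_cancel e4
      · exact congrFun h ⟨b, hb⟩
    · intro ψ
      refine ⟨⟨fun b => if h : b = 0 then δ + ∑ b' : {b : ZMod (2^t) // b ≠ 0}, ψ b'
        else ψ ⟨b, h⟩, ?_⟩, ?_⟩
      · rw [sum_split_at (0 : ZMod (2^t))]
        rw [dif_pos rfl]
        have e5 : ∀ b : {b : ZMod (2^t) // b ≠ 0},
            (if h : b.1 = 0 then δ + ∑ b' : {b : ZMod (2^t) // b ≠ 0}, ψ b' else ψ ⟨b.1, h⟩)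
              = ψ b := by
          rintro ⟨b, hb⟩
          rw [dif_neg hb]
        rw [Finset.sum_congr rfl (fun b _ => e5 b)]
        rw [add_assoc]
        rw [vec_add_self, add_zero]
      · funext b
        show (if h : b.1 = 0 then _ else ψ ⟨b.1, h⟩) = ψ b
        rw [dif_neg b.2]
  rw [Fintype.card_of_bijective hbij]
  rw [Fintype.card_fun]
  rw [Fintype.card_fun]
  rw [card_subtype_ne, ZMod.card]
  simp [Fintype.card_fin]

def rotX (δ : Fin m' → ZMod 2) (g : ZMod (2^t)) (x : Xset t m' δ) : Xset t m' δ :=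
  ⟨fun b => x.1 (b + g), by
    show ∑ b, x.1 (b + g) = δ
    calc ∑ b, x.1 (b + g) = ∑ b, x.1 b :=
          Fintype.sum_equiv (Equiv.addRight g) _ _ (fun b => rfl)
      _ = δ := x.2⟩

def sX (δ : Fin m' → ZMod 2) : Setoid (Xset t m' δ) where
  r := fun x y => ∃ g, ∀ b, x.1 (b + g) = y.1 b
  iseqv := by
    constructor
    · intro x
      exact ⟨0, fun b => by rw [add_zero]⟩
    · rintro x y ⟨g, hg⟩
      refine ⟨-g, fun b => ?_⟩
      rw [← hg (b + -g)]
      congr 1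
      ring
    · rintro x y z ⟨g, hg⟩ ⟨g', hg'⟩
      refine ⟨g' + g, fun b => ?_⟩
      rw [← hg' b, ← hg (b + g')]
      congr 1
      ring

noncomputable instance QXFintype (δ : Fin m' → ZMod 2) : Fintype (Quotient (sX t m' δ)) := by
  classical
  exact @Quotient.fintype _ _ (sX t m' δ) (fun _ _ => Classical.propDecidable _)

lemma rotX_rel (δ : Fin m' → ZMod 2) (g : ZMod (2^t)) (x : Xset t m' δ) :
    (sX t m' δ).r x (rotX t m' δ g x) := ⟨g, fun _ => rfl⟩

lemma TX_bij (δ : Fin m' → ZMod 2) (hδ : δ ≠ 0) :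
    Function.Bijective
      (fun p : Quotient (sX t m' δ) × ZMod (2^t) => rotX t m' δ p.2 p.1.out) := by
  constructor
  · rintro ⟨q, g⟩ ⟨q', g'⟩ h
    simp only at h
    have hq : q = q' := by
      have e1 : ⟦rotX t m' δ g q.out⟧ = q := by
        rw [← Quotient.sound (rotX_rel t m' δ g q.out), Quotient.out_eq]
      have e2 : ⟦rotX t m' δ g' q'.out⟧ = q' := by
        rw [← Quotient.sound (rotX_rel t m' δ g' q'.out), Quotient.out_eq]
      rw [← e1, ← e2, h]
    subst hq
    have hvals : ∀ b, q.out.1 (b + g) = q.out.1 (b + g') := by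
      intro b
      have := congrArg Subtype.val h
      exact congrFun this b
    by_cases hgg : g = g'
    · rw [hgg]
    · exfalso
      have hinv : ∀ w, q.out.1 (w + (g' - g)) = q.out.1 w := by
        intro w
        have := hvals (w - g)
        rw [show w - g + g = w by ring, show w - g + g' = w + (g' - g) by ring] at this
        exact this.symm
      have hzero := sum_eq_zero_of_rot_invariant q.out.1 (sub_ne_zero.2 (Ne.symm hgg)) hinv
      rw [q.out.2] at hzero
      exact hδ hzero
  · intro x
    have hrel : (sX t m' δ).r (Quotient.out ⟦x⟧) x := Quotient.mk_out x
    obtain ⟨g, hg⟩ := hrel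
    exact ⟨⟨⟦x⟧, g⟩, Subtype.ext (funext hg)⟩

lemma QX_card (δ : Fin m' → ZMod 2) (hδ : δ ≠ 0) :
    Fintype.card (Quotient (sX t m' δ)) * 2^t = (2^m')^(2^t - 1) := by
  have h := Fintype.card_of_bijective (TX_bij t m' δ hδ)
  rw [Fintype.card_prod, ZMod.card] at h
  rw [← Xset_card t m' δ]
  exact h

end Horizontal

section Phi

variable (t k : ℕ)

lemma zmod_zero_ne_one (ht : 1 ≤ t) : (0 : ZMod (2^t)) ≠ 1 := by
  haveI : NeZero (2^t) := ⟨(pow_pos (by norm_num : (0:ℕ) < 2) t).ne'⟩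
  intro h
  have hv := congrArg ZMod.val h
  rw [ZMod.val_zero, ZMod.val_one_eq_one_mod, Nat.mod_eq_of_lt (by
    have : (2:ℕ)^1 ≤ 2^t := Nat.pow_le_pow_right (by norm_num) ht
    omega)] at hv
  omega

def DPhi : Type := {b : ZMod (2^t) // b ≠ 0 ∧ b ≠ 1} → ZMod (2^k)

noncomputable instance DPhiFintype : Fintype (DPhi t k) := by
  classical
  unfold DPhi
  infer_instance

lemma DPhi_card (ht : 1 ≤ t) : Fintype.card (DPhi t k) = (2^k)^(2^t - 2) := by
  classical
  unfold DPhi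
  rw [Fintype.card_fun, ZMod.card]
  congr 1
  rw [Fintype.card_subtype]
  have h01 : (1 : ZMod (2^t)) ≠ 0 := (zmod_zero_ne_one t ht).symm
  have hset : Finset.univ.filter (fun b : ZMod (2^t) => b ≠ 0 ∧ b ≠ 1)
      = (Finset.univ.erase 0).erase 1 := by
    ext b
    simp only [Finset.mem_filter, Finset.mem_univ, Finset.mem_erase, true_and]
    tauto
  rw [hset, Finset.card_erase_of_mem (by
      rw [Finset.mem_erase]
      exact ⟨h01, Finset.mem_univ _⟩),
    Finset.card_erase_of_mem (Finset.mem_univ _), Finset.card_univ, ZMod.card]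
  omega

lemma sum_split_two {M : Type*} [AddCommGroup M] (ht : 1 ≤ t) (f : ZMod (2^t) → M) :
    ∑ b, f b = f 0 + f 1 + ∑ b : {b : ZMod (2^t) // b ≠ 0 ∧ b ≠ 1}, f b.1 := by
  classical
  have h01 : (1 : ZMod (2^t)) ≠ 0 := (zmod_zero_ne_one t ht).symm
  rw [sum_split_at (0 : ZMod (2^t)) f]
  rw [sum_split_at (⟨1, h01⟩ : {b : ZMod (2^t) // b ≠ 0}) (fun b => f b.1)]
  rw [← add_assoc]
  congr 1
  apply Fintype.sum_equiv (Equiv.mk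
    (fun bb : {b' : {b : ZMod (2^t) // b ≠ 0} // b' ≠ ⟨1, h01⟩} =>
      (⟨bb.1.1, bb.1.2, fun h => bb.2 (Subtype.ext h)⟩ : {b : ZMod (2^t) // b ≠ 0 ∧ b ≠ 1}))
    (fun b => ⟨⟨b.1, b.2.1⟩, fun h => b.2.2 (by
      have := congrArg Subtype.val h
      exact this)⟩)
    (fun bb => by ext; rfl)
    (fun b => by ext; rfl))
  intro bb
  rfl

noncomputable def toPhi (ψ : DPhi t k) : ZMod (2^t) → ZMod (2^k) := fun b =>
  if h0 : b = 0 then 0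
  else if h1 : b = 1 then -(∑ b' : {b : ZMod (2^t) // b ≠ 0 ∧ b ≠ 1}, ψ b')
  else ψ ⟨b, h0, h1⟩

lemma toPhi_zero (ψ : DPhi t k) : toPhi t k ψ 0 = 0 := by
  unfold toPhi
  rw [dif_pos rfl]

lemma toPhi_sub (ψ : DPhi t k) (b : {b : ZMod (2^t) // b ≠ 0 ∧ b ≠ 1}) :
    toPhi t k ψ b.1 = ψ b := by
  unfold toPhi
  rw [dif_neg b.2.1, dif_neg b.2.2]

lemma toPhi_sum (ht : 1 ≤ t) (ψ : DPhi t k) : ∑ b, toPhi t k ψ b = 0 := by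
  rw [sum_split_two t ht]
  rw [toPhi_zero]
  have h1 : toPhi t k ψ 1 = -(∑ b' : {b : ZMod (2^t) // b ≠ 0 ∧ b ≠ 1}, ψ b') := by
    unfold toPhi
    rw [dif_neg (zmod_zero_ne_one t ht).symm, dif_pos rfl]
  rw [h1]
  rw [Finset.sum_congr rfl (fun b _ => toPhi_sub t k ψ b)]
  ring

lemma toPhi_spec (ht : 1 ≤ t) (φ : ZMod (2^t) → ZMod (2^k)) (h0 : φ 0 = 0)
    (hs : ∑ b, φ b = 0) : toPhi t k (fun b' => φ b'.1) = φ := by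
  funext b
  by_cases hb0 : b = 0
  · subst hb0
    exact (toPhi_zero t k (fun b' => φ b'.1)).trans h0.symm
  · by_cases hb1 : b = 1
    · subst hb1
      unfold toPhi
      rw [dif_neg hb0, dif_pos rfl]
      rw [sum_split_two t ht, h0, zero_add] at hs
      linear_combination -hs
    · exact toPhi_sub t k (fun b' => φ b'.1) ⟨b, hb0, hb1⟩

end Phi

/-! ### existence of perfect factors in the full range -/

theorem exists_PF (k n : ℕ) (hk : 2 ≤ k) (hkn : k < n) (hn : n < 2^k) :
    Nonempty (PF n k) := by
  by_cases hcase : 2^(k-1) ≤ n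
  · exact ⟨affinePF n k (by omega) hcase hn⟩
  · push_neg at hcase
    have hk4 : 4 ≤ k := by
      by_contra h
      push_neg at h
      interval_cases k
      · norm_num at hcase
        omega
      · norm_num at hcase
        omega
    have hκ : 2 ≤ k - 1 := by omega
    have hnκ : n < 2^(k-1) := hcase
    have hj : (n - ((k-1) + 2)) + 2 ≤ 2^(k-1) := by omega
    obtain ⟨P, _⟩ := chainAux hκ (n - ((k-1)+2)) hj
    have e1 : (k-1) + 2 + (n - ((k-1)+2)) = n := by omega
    have e2 : (k-1) + 1 = k := by omega
    rw [e1, e2] at P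
    exact ⟨P⟩

/-! ### the Fin m ≃ punctured ZMod equivalence -/

noncomputable def finEquivNe (t : ℕ) (ht : 1 ≤ t) (c : ZMod (2^t)) :
    Fin (2^t - 1) ≃ {b : ZMod (2^t) // b ≠ c + ((2^t - 1 : ℕ) : ZMod (2^t))} := by
  haveI : NeZero (2^t) := ⟨(pow_pos (by norm_num : (0:ℕ) < 2) t).ne'⟩
  have hs2 : 2 ≤ 2^t := by
    calc (2:ℕ) = 2^1 := by norm_num
    _ ≤ 2^t := Nat.pow_le_pow_right (by norm_num) ht
  have hmval : (((2^t - 1 : ℕ)) : ZMod (2^t)).val = 2^t - 1 := by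
    rw [ZMod.val_natCast, Nat.mod_eq_of_lt (by omega)]
  refine Equiv.mk
    (fun y => ⟨c + ((y:ℕ) : ZMod (2^t)), ?_⟩)
    (fun b => ⟨(b.1 - c).val, ?_⟩) ?_ ?_
  · intro h
    have h2 : ((y:ℕ) : ZMod (2^t)) = ((2^t - 1 : ℕ) : ZMod (2^t)) := by
      have := add_left_cancel h
      exact this
    have h3 := congrArg ZMod.val h2
    rw [ZMod.val_natCast, Nat.mod_eq_of_lt (by omega), hmval] at h3
    omega
  · have hlt : (b.1 - c).val < 2^t := ZMod.val_lt _
    have hne : (b.1 - c).val ≠ 2^t - 1 := by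
      intro h
      apply b.2
      have : b.1 - c = ((2^t - 1 : ℕ) : ZMod (2^t)) := by
        have := congrArg (fun (w : ℕ) => (w : ZMod (2^t))) h
        rw [ZMod.natCast_val, ZMod.cast_id] at this
        exact this
      have h4 : b.1 = c + (b.1 - c) := by ring
      rw [h4, this]
    omega
  · intro y
    apply Fin.ext
    show ((c + ((y:ℕ) : ZMod (2^t)) - c).val) = y
    rw [show c + ((y:ℕ) : ZMod (2^t)) - c = ((y:ℕ) : ZMod (2^t)) by ring]
    rw [ZMod.val_natCast, Nat.mod_eq_of_lt (by omega)]
  · intro b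
    apply Subtype.ext
    show c + (((b.1 - c).val : ℕ) : ZMod (2^t)) = b.1
    rw [ZMod.natCast_val, ZMod.cast_id]
    ring

/-! ### main construction -/

/-- `C` is an `(r, s; n, m)`-de Bruijn array code of size `Δ`: every `n × m` binary
matrix appears exactly once as a window in exactly one codeword. -/
def IsDBAC (r s n m Δ : ℕ) (C : Fin Δ → (ZMod r × ZMod s → ZMod 2)) : Prop :=
  ∀ M : Fin n → Fin m → ZMod 2,
    ∃! p : Fin Δ × ZMod r × ZMod s,
      ∀ (x : Fin n) (y : Fin m),
        C p.1 (p.2.1 + (x : ℕ), p.2.2 + (y : ℕ)) = M x y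

theorem stmt_7 (k t n : ℕ) (hk : 2 ≤ k) (hkn : k < n) (hn : n < 2 ^ k) (hkt : k ≤ t) :
    ∃ C : Fin (2 ^ (n * (2 ^ t - 1) - k - t)) → (ZMod (2 ^ k) × ZMod (2 ^ t) → ZMod 2),
      IsDBAC (2 ^ k) (2 ^ t) n (2 ^ t - 1) (2 ^ (n * (2 ^ t - 1) - k - t)) C := by
  classical
  obtain ⟨P⟩ := exists_PF k n hk hkn hn
  haveI : NeZero (2^k) := ⟨(pow_pos (by norm_num : (0:ℕ) < 2) k).ne'⟩
  haveI : NeZero (2^t) := ⟨(pow_pos (by norm_num : (0:ℕ) < 2) t).ne'⟩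
  have ht1 : 1 ≤ t := by omega
  have hs2 : 2 ≤ 2^t := by
    calc (2:ℕ) = 2^1 := by norm_num
    _ ≤ 2^t := Nat.pow_le_pow_right (by norm_num) ht1
  have hm1 : 1 ≤ 2^t - 1 := by omega
  have hms : 2^t - 1 < 2^t := by omega
  have hnr : n < 2^k := hn
  -- alphabet equivalence
  have hcardD : Fintype.card P.D = 2^(n-k) := by
    have h := P.cardD
    have h2 : (2:ℕ)^(n-k) * 2^k = 2^n := by
      rw [← pow_add]
      congr 1
      omega
    exact Nat.eq_of_mul_eq_mul_right (pow_pos (by norm_num) k) (h.trans h2.symm)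
  let EV : P.D ≃ (Fin (n-k) → ZMod 2) := Fintype.equivOfCardEq (by
    rw [hcardD, Fintype.card_fun]
    simp [Fintype.card_fin])
  let δ : Fin (n-k) → ZMod 2 := fun _ => 1
  have hδ : δ ≠ 0 := by
    intro h
    have := congrFun h ⟨0, by omega⟩
    exact one_ne_zero this
  -- codeword space and array map
  let W := Quotient (sX t (n-k) δ) × DPhi t k
  let arr : W → (ZMod (2^k) × ZMod (2^t) → ZMod 2) := fun w p =>
    P.f (EV.symm (w.1.out.1 p.2)) ((p.1 + toPhi t k w.2 p.2).val)
  let T : W × ZMod (2^k) × ZMod (2^t) → (Fin n → Fin (2^t - 1) → ZMod 2) := fun q =>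
    fun x y => arr q.1 (q.2.1 + ((x:ℕ) : ZMod (2^k)), q.2.2 + ((y:ℕ) : ZMod (2^t)))
  -- val facts
  have hyval : ∀ y : Fin (2^t - 1), (((y:ℕ) : ZMod (2^t))).val = (y:ℕ) := by
    intro y
    rw [ZMod.val_natCast, Nat.mod_eq_of_lt (by omega)]
  have hmcast : (((2^t - 1 : ℕ)) : ZMod (2^t)).val = 2^t - 1 := by
    rw [ZMod.val_natCast, Nat.mod_eq_of_lt (by omega)]
  -- surjectivity of the window map
  have hTsurj : Function.Surjective T := by
    intro M
    set EB := Equiv.ofBijective _ P.bij with hEB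
    set dp : Fin (2^t - 1) → P.D × ZMod (2^k) := fun y => EB.symm (fun x => M x y) with hdpdef
    have hdp : ∀ (y : Fin (2^t-1)) (x : Fin n),
        P.f (dp y).1 ((dp y).2.val + (x:ℕ)) = M x y := by
      intro y x
      have h := EB.apply_symm_apply (fun x => M x y)
      have h3 : win n (P.f (dp y).1) ((dp y).2.val) = fun x => M x y := h
      exact congrFun h3 x
    -- column word placed at position 0
    set c₀ : ZMod (2^t) → (Fin (n-k) → ZMod 2) := fun b =>
      if h : b.val < 2^t - 1 then EV ((dp ⟨b.val, h⟩).1)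
      else δ + ∑ y : Fin (2^t - 1), EV ((dp y).1) with hc₀
    have hc₀pos : ∀ (b : ZMod (2^t)) (h : b.val < 2^t - 1),
        c₀ b = EV ((dp ⟨b.val, h⟩).1) := fun b h => dif_pos h
    have hc₀neg : ∀ (b : ZMod (2^t)), ¬ (b.val < 2^t - 1) →
        c₀ b = δ + ∑ y : Fin (2^t - 1), EV ((dp y).1) := fun b h => dif_neg h
    have hc₀y : ∀ y : Fin (2^t - 1), c₀ (((y:ℕ) : ZMod (2^t))) = EV ((dp y).1) := by
      intro y
      rw [hc₀pos _ (by rw [hyval]; omega)]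
      congr 2
      simp only [hyval, Fin.eta]
    have hc₀sum : ∑ b, c₀ b = δ := by
      rw [sum_split_at ((0 : ZMod (2^t)) + ((2^t - 1 : ℕ) : ZMod (2^t))) c₀]
      have e0 : c₀ (0 + ((2^t - 1 : ℕ) : ZMod (2^t)))
          = δ + ∑ y : Fin (2^t - 1), EV ((dp y).1) := by
        apply hc₀neg
        rw [zero_add, hmcast]
        omega
      have e1 : ∑ b : {b : ZMod (2^t) // b ≠ 0 + ((2^t - 1 : ℕ) : ZMod (2^t))}, c₀ b.1
          = ∑ y : Fin (2^t - 1), EV ((dp y).1) := by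
        rw [← Fintype.sum_equiv (finEquivNe t ht1 0) (fun y => c₀ ((finEquivNe t ht1 0 y).1))
          (fun b => c₀ b.1) (fun y => rfl)]
        apply Finset.sum_congr rfl
        intro y _
        show c₀ (0 + ((y:ℕ) : ZMod (2^t))) = EV ((dp y).1)
        rw [zero_add]
        exact hc₀y y
      rw [e0, e1, add_assoc, vec_add_self, add_zero]
    set cX : Xset t (n-k) δ := ⟨c₀, hc₀sum⟩ with hcX
    have hrel : (sX t (n-k) δ).r (Quotient.out ⟦cX⟧) cX := Quotient.mk_out cX
    obtain ⟨j, hj⟩ := hrel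
    set q : Quotient (sX t (n-k) δ) := ⟦cX⟧ with hq
    have hcol : ∀ y : Fin (2^t - 1), q.out.1 (j + ((y:ℕ) : ZMod (2^t))) = EV ((dp y).1) := by
      intro y
      have h := hj (((y:ℕ) : ZMod (2^t)))
      rw [add_comm] at h
      rw [h]
      exact hc₀y y
    -- phase decode
    set i : ZMod (2^k) :=
      if h : ((-j : ZMod (2^t))).val < 2^t - 1 then (dp ⟨(-j).val, h⟩).2
      else -(∑ y : Fin (2^t - 1), (dp y).2) with hi
    set φt : ZMod (2^t) → ZMod (2^k) := fun b =>
      if h : ((b - j).val < 2^t - 1) then (dp ⟨(b-j).val, h⟩).2 - i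
      else -(∑ y : Fin (2^t - 1), ((dp y).2 - i)) with hφt
    have hφpos : ∀ (b : ZMod (2^t)) (h : (b - j).val < 2^t - 1),
        φt b = (dp ⟨(b-j).val, h⟩).2 - i := fun b h => dif_pos h
    have hφneg : ∀ (b : ZMod (2^t)), ¬ ((b - j).val < 2^t - 1) →
        φt b = -(∑ y : Fin (2^t - 1), ((dp y).2 - i)) := fun b h => dif_neg h
    have hcastm : (((2^t - 1 : ℕ)) : ZMod (2^k)) = -1 := by
      rw [Nat.cast_sub (by omega), Nat.cast_one]
      have hc : (((2^t : ℕ)) : ZMod (2^k)) = 0 :=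
        (ZMod.natCast_eq_zero_iff _ _).2 (pow_dvd_pow 2 hkt)
      rw [hc]
      ring
    have hsumsub : ∑ y : Fin (2^t - 1), ((dp y).2 - i)
        = (∑ y : Fin (2^t - 1), (dp y).2) + i := by
      rw [Finset.sum_sub_distrib]
      rw [Finset.sum_const, Finset.card_univ, Fintype.card_fin]
      rw [nsmul_eq_mul]
      rw [hcastm]
      ring
    have hφy : ∀ y : Fin (2^t - 1), φt (j + ((y:ℕ) : ZMod (2^t))) = (dp y).2 - i := by
      intro y
      have hsub : j + ((y:ℕ) : ZMod (2^t)) - j = ((y:ℕ) : ZMod (2^t)) := by ring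
      rw [hφpos _ (by rw [hsub, hyval]; omega)]
      congr 2
      simp only [hsub, hyval, Fin.eta]
    have hφ0 : φt 0 = 0 := by
      have hsub0 : (0 : ZMod (2^t)) - j = -j := by ring
      by_cases hc : ((-j : ZMod (2^t))).val < 2^t - 1
      · rw [hφpos 0 (by rw [hsub0]; exact hc)]
        rw [hi, dif_pos hc]
        have hidx : (⟨((0:ZMod (2^t)) - j).val, by rw [hsub0]; exact hc⟩ : Fin (2^t-1))
            = ⟨(-j : ZMod (2^t)).val, hc⟩ := by
          apply Fin.ext
          show ((0:ZMod (2^t)) - j).val = (-j : ZMod (2^t)).val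
          rw [hsub0]
        rw [hidx]
        ring
      · rw [hφneg 0 (by rw [hsub0]; exact hc)]
        rw [hsumsub, hi, dif_neg hc]
        ring
    have hφsum : ∑ b, φt b = 0 := by
      rw [sum_split_at (j + ((2^t - 1 : ℕ) : ZMod (2^t))) φt]
      have e0 : φt (j + ((2^t - 1 : ℕ) : ZMod (2^t)))
          = -(∑ y : Fin (2^t - 1), ((dp y).2 - i)) := by
        apply hφneg
        rw [show j + ((2^t - 1 : ℕ) : ZMod (2^t)) - j = ((2^t - 1 : ℕ) : ZMod (2^t)) by ring]
        rw [hmcast]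
        omega
      have e1 : ∑ b : {b : ZMod (2^t) // b ≠ j + ((2^t - 1 : ℕ) : ZMod (2^t))}, φt b.1
          = ∑ y : Fin (2^t - 1), ((dp y).2 - i) := by
        rw [← Fintype.sum_equiv (finEquivNe t ht1 j) (fun y => φt ((finEquivNe t ht1 j y).1))
          (fun b => φt b.1) (fun y => rfl)]
        apply Finset.sum_congr rfl
        intro y _
        exact hφy y
      rw [e0, e1]
      ring
    set ψ : DPhi t k := fun b' => φt b'.1 with hψdef
    have hψ : toPhi t k ψ = φt := toPhi_spec t k ht1 φt hφ0 hφsum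
    refine ⟨⟨⟨q, ψ⟩, i, j⟩, ?_⟩
    funext x y
    show arr (q, ψ) (i + ((x:ℕ) : ZMod (2^k)), j + ((y:ℕ) : ZMod (2^t))) = M x y
    show P.f (EV.symm (q.out.1 (j + ((y:ℕ) : ZMod (2^t)))))
        (((i + ((x:ℕ) : ZMod (2^k))) + toPhi t k ψ (j + ((y:ℕ) : ZMod (2^t)))).val) = M x y
    rw [hψ, hcol y, Equiv.symm_apply_apply, hφy y]
    rw [show (i + ((x:ℕ) : ZMod (2^k))) + ((dp y).2 - i)
        = (dp y).2 + ((x:ℕ) : ZMod (2^k)) by ring]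
    have hxv : (((x:ℕ)) : ZMod (2^k)).val = (x:ℕ) := by
      rw [ZMod.val_natCast, Nat.mod_eq_of_lt (by omega)]
    rw [ZMod.val_add, hxv]
    rw [periodic_mod (P.per (dp y).1)]
    exact hdp y x
  -- cardinalities
  have hcardW : Fintype.card W * (2^k * 2^t) = 2^(n * (2^t - 1)) := by
    have e : Fintype.card W * (2^k * 2^t)
        = (Fintype.card (Quotient (sX t (n-k) δ)) * 2^t) * (Fintype.card (DPhi t k) * 2^k) := by
      show Fintype.card (Quotient (sX t (n-k) δ) × DPhi t k) * (2^k * 2^t) = _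
      rw [Fintype.card_prod]
      ring
    rw [e, QX_card t (n-k) δ hδ, DPhi_card t k ht1]
    rw [← pow_succ (2^k) (2^t - 2)]
    rw [show 2^t - 2 + 1 = 2^t - 1 by omega]
    rw [← mul_pow]
    rw [← pow_add]
    rw [show n - k + k = n by omega]
    rw [← pow_mul]
  have hktnm : k + t ≤ n * (2^t - 1) := by
    have hmt : t ≤ 2^t - 1 := by
      have := Nat.lt_two_pow_self (n := t)
      omega
    have h1 : (k + 1) * (2^t - 1) ≤ n * (2^t - 1) :=
      Nat.mul_le_mul_right _ (by omega)
    have h2 : k + t ≤ (k + 1) * (2^t - 1) := by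
      have h3 : k * 1 ≤ k * (2^t - 1) := Nat.mul_le_mul_left _ (by omega)
      calc k + t ≤ k * (2^t - 1) + (2^t - 1) := by omega
      _ = (k + 1) * (2^t - 1) := by ring
    omega
  have hΔW : Fintype.card (Fin (2 ^ (n * (2 ^ t - 1) - k - t))) = Fintype.card W := by
    rw [Fintype.card_fin]
    have h1 : Fintype.card W * (2^k * 2^t) = 2 ^ (n * (2 ^ t - 1) - k - t) * (2^k * 2^t) := by
      rw [hcardW, ← pow_add, ← pow_add]
      congr 1
      omega
    have := Nat.eq_of_mul_eq_mul_right
      (show 0 < 2^k * 2^t from Nat.mul_pos (pow_pos (by norm_num) k) (pow_pos (by norm_num) t)) h1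
    omega
  set EW := Fintype.equivOfCardEq hΔW with hEW
  refine ⟨fun c => arr (EW c), ?_⟩
  intro M
  set T2 : Fin (2 ^ (n * (2 ^ t - 1) - k - t)) × ZMod (2^k) × ZMod (2^t)
      → (Fin n → Fin (2^t - 1) → ZMod 2) := fun p => T ⟨EW p.1, p.2⟩ with hT2
  have hT2surj : Function.Surjective T2 := by
    intro M'
    obtain ⟨⟨w, ij⟩, hw⟩ := hTsurj M'
    exact ⟨⟨EW.symm w, ij⟩, by
      rw [hT2]
      show T ⟨EW (EW.symm w), ij⟩ = M'
      rw [Equiv.apply_symm_apply]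
      exact hw⟩
  have hT2bij : Function.Bijective T2 := by
    rw [Fintype.bijective_iff_surjective_and_card]
    refine ⟨hT2surj, ?_⟩
    rw [Fintype.card_prod, Fintype.card_prod, ZMod.card, ZMod.card, hΔW]
    rw [Fintype.card_fun, Fintype.card_fun, Fintype.card_fin]
    rw [hcardW]
    rw [show Fintype.card (ZMod 2) = 2 from ZMod.card 2]
    rw [← pow_mul, Fintype.card_fin]
    congr 1
    ring
  obtain ⟨p, hp, hu⟩ := hT2bij.existsUnique M
  have hiff : ∀ p' : Fin (2 ^ (n * (2 ^ t - 1) - k - t)) × ZMod (2^k) × ZMod (2^t),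
      (∀ (x : Fin n) (y : Fin (2^t - 1)),
        arr (EW p'.1) (p'.2.1 + ((x:ℕ) : ZMod (2^k)), p'.2.2 + ((y:ℕ) : ZMod (2^t))) = M x y)
        ↔ T2 p' = M := by
    intro p'
    constructor
    · intro h
      funext x y
      exact h x y
    · intro h x y
      exact congrFun (congrFun h x) y
  exact ⟨p, (hiff p).2 hp, fun p' hp' => hu p' ((hiff p').1 hp')⟩
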